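/- arXiv:2509.05687 — 6 statements merged into one kernel-verified Lean document; each statement's English description precedes it below -/
import Mathlib

section
/- For every τ > 1, the s-dimensional Hausdorff measure of W(τ) is zero whenever s > 2/(τ+1). Consequently the Hausdorff dimension of W(τ) is at most 2/(τ+1). -/
open MeasureTheory Filter
open scoped ENNReal NNReal

/-- Distance from `y` to the nearest integer. -/
noncomputable def distNearestInt (y : ℝ) : ℝ := |y - round y|

/-- The set of `τ`-well approximable numbers in `[0,1)`. -/
def W (τ : ℝ) : Set ℝ :=
  {x : ℝ | x ∈ Set.Ico (0 : ℝ) 1 ∧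
    {q : ℕ | distNearestInt ((q : ℝ) * x) < (q : ℝ) ^ (-τ)}.Infinite}

lemma JB_measure_zero {τ : ℝ} (hτ : 1 < τ) {s : ℝ} (hs : 2 / (τ + 1) < s) :
    μH[s] (W τ) = 0 := by
  set a : ℝ := τ + 1 with ha_def
  have ha : 0 < a := by simp only [ha_def]; linarith
  have hs0 : 0 < s := lt_of_le_of_lt (by positivity) hs
  have has : 2 < a * s := by
    have := (div_lt_iff₀ ha).1 hs
    nlinarith
  -- the covering balls
  set t : ℕ → ℕ × ℕ → Set ℝ := fun N i =>
    if N ≤ i.1 ∧ i.2 ≤ i.1 then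
      Metric.closedBall ((i.2 : ℝ) / (i.1 : ℝ)) ((i.1 : ℝ) ^ (-a)) else ∅ with ht_def
  set r : ℕ → ℝ≥0∞ := fun N => ENNReal.ofReal (2 * (N : ℝ) ^ (-a)) with hr_def
  -- diameters tend to zero
  have hnat : Tendsto (fun N : ℕ => (N : ℝ) ^ (-a)) atTop (nhds 0) :=
    (tendsto_rpow_neg_atTop ha).comp tendsto_natCast_atTop_atTop
  have hr : Tendsto r atTop (nhds 0) := by
    have h2 : Tendsto (fun N : ℕ => 2 * (N : ℝ) ^ (-a)) atTop (nhds (2 * 0)) :=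
      hnat.const_mul 2
    have := ENNReal.tendsto_ofReal h2
    simpa [hr_def] using this
  -- diameter bound
  have ht : ∀ᶠ N : ℕ in atTop, ∀ i : ℕ × ℕ, EMetric.diam (t N i) ≤ r N := by
    filter_upwards [eventually_ge_atTop 1] with N hN i
    rcases i with ⟨q, p⟩
    by_cases h : N ≤ q ∧ p ≤ q
    · have hq1 : 1 ≤ q := hN.trans h.1
      have hN0 : (0 : ℝ) < N := by exact_mod_cast hN
      have hNq : (N : ℝ) ≤ q := by exact_mod_cast h.1
      have hqa : (q : ℝ) ^ (-a) ≤ (N : ℝ) ^ (-a) :=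
        Real.rpow_le_rpow_of_nonpos hN0 hNq (by linarith)
      simp only [ht_def, h, and_self, if_true]
      refine EMetric.diam_le fun x hx y hy => ?_
      rw [edist_dist]
      refine ENNReal.ofReal_le_ofReal ?_
      have hx' := Metric.mem_closedBall.1 hx
      have hy' := Metric.mem_closedBall.1 hy
      calc dist x y ≤ dist x ((p : ℝ) / q) + dist y ((p : ℝ) / q) := dist_triangle_right _ _ _
        _ ≤ 2 * (N : ℝ) ^ (-a) := by linarith
    · simp [ht_def, h, EMetric.diam, Metric.ediam_empty]
  -- covering property
  have hst : ∀ N : ℕ, W τ ⊆ ⋃ i : ℕ × ℕ, t N i := by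
    intro N x hx
    obtain ⟨hx01, hinf⟩ := hx
    obtain ⟨q, hqmem, hqgt⟩ := hinf.exists_gt N
    have hq1 : 1 ≤ q := by omega
    have hq0 : (0 : ℝ) < q := by exact_mod_cast hq1
    have hx0 : (0 : ℝ) ≤ x := hx01.1
    have hx1 : x < 1 := hx01.2
    set p' : ℤ := round ((q : ℝ) * x) with hp'_def
    have hmem : |(q : ℝ) * x - p'| < (q : ℝ) ^ (-τ) := hqmem
    have habs : |(q : ℝ) * x - p'| ≤ 1 / 2 := abs_sub_round _
    have hqx0 : (0 : ℝ) ≤ (q : ℝ) * x := by positivity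
    have hqx1 : (q : ℝ) * x < q := by nlinarith
    have hp'0 : 0 ≤ p' := by
      have h1 : (-1 : ℝ) < (p' : ℝ) := by
        have := abs_le.1 habs
        linarith [this.2]
      have h2 : (-1 : ℤ) < p' := by exact_mod_cast h1
      omega
    have hp'q : p' ≤ (q : ℤ) := by
      have h1 : (p' : ℝ) < (q : ℝ) + 1 := by
        have := abs_le.1 habs
        linarith [this.1]
      have : p' < (q : ℤ) + 1 := by exact_mod_cast h1
      omega
    set p : ℕ := p'.toNat with hp_def
    have hpq : p ≤ q := by omega
    have hpc : ((p : ℕ) : ℝ) = (p' : ℝ) := by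
      have h3 := Int.toNat_of_nonneg hp'0
      rw [hp_def]
      exact_mod_cast congrArg (fun z : ℤ => (z : ℝ)) h3
    have hkey : (q : ℝ) ^ (-a) = (q : ℝ) ^ (-τ) / q := by
      rw [show -a = -τ + (-1) by simp [ha_def]; ring, Real.rpow_add hq0, Real.rpow_neg_one]
      ring
    have hdist : |x - (p : ℝ) / q| ≤ (q : ℝ) ^ (-a) := by
      have h1 : x - (p : ℝ) / q = ((q : ℝ) * x - p') / q := by
        rw [hpc]; field_simp; try ring
      rw [h1, abs_div, abs_of_pos hq0, hkey]
      gcongr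
    refine Set.mem_iUnion.2 ⟨(q, p), ?_⟩
    have hcond : N ≤ q ∧ p ≤ q := ⟨hqgt.le, hpq⟩
    simp only [ht_def, hcond, and_self, if_true]
    rw [Metric.mem_closedBall, Real.dist_eq]
    exact hdist
  -- the comparison series
  set G : ℕ → ℝ := fun q => ((q : ℝ) + 1) * (2 * (q : ℝ) ^ (-a)) ^ s with hG_def
  have hG_nonneg : ∀ q : ℕ, 0 ≤ G q := fun q => by positivity
  have hG_sum : Summable G := by
    have hmajsum : Summable (fun q : ℕ => 2 * 2 ^ s * (q : ℝ) ^ (1 - a * s)) :=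
      (Real.summable_nat_rpow.2 (by linarith)).mul_left _
    refine Summable.of_nonneg_of_le hG_nonneg ?_ hmajsum
    intro q
    rcases Nat.eq_zero_or_pos q with rfl | hq
    · simp only [hG_def, Nat.cast_zero]
      rw [Real.zero_rpow (by linarith : -a ≠ 0), Real.zero_rpow (by linarith : (1 : ℝ) - a * s ≠ 0)]
      rw [mul_zero, Real.zero_rpow hs0.ne']
      simp
    · have hq0 : (0 : ℝ) < q := by exact_mod_cast hq
      have hq1 : (1 : ℝ) ≤ q := by exact_mod_cast hq
      have h1 : (2 * (q : ℝ) ^ (-a)) ^ s = 2 ^ s * (q : ℝ) ^ (-(a * s)) := by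
        rw [Real.mul_rpow (by norm_num) (Real.rpow_nonneg hq0.le _),
          ← Real.rpow_mul hq0.le, neg_mul]
      have h2 : (q : ℝ) * (q : ℝ) ^ (-(a * s)) = (q : ℝ) ^ (1 - a * s) := by
        rw [show (1 : ℝ) - a * s = 1 + -(a * s) by ring, Real.rpow_add hq0, Real.rpow_one]
      have hGq : G q = ((q : ℝ) + 1) * (2 * (q : ℝ) ^ (-a)) ^ s := rfl
      calc G q = ((q : ℝ) + 1) * (2 ^ s * (q : ℝ) ^ (-(a * s))) := by rw [hGq, h1]
        _ ≤ (2 * q) * (2 ^ s * (q : ℝ) ^ (-(a * s))) := by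
            have hle : (q : ℝ) + 1 ≤ 2 * q := by linarith
            exact mul_le_mul_of_nonneg_right hle (by positivity)
        _ = 2 * 2 ^ s * ((q : ℝ) * (q : ℝ) ^ (-(a * s))) := by ring
        _ = 2 * 2 ^ s * (q : ℝ) ^ (1 - a * s) := by rw [h2]
  set E : ℕ → ℝ≥0∞ := fun q => ENNReal.ofReal (G q) with hE_def
  have hE_ne_top : ∑' q, E q ≠ ⊤ := by
    rw [hE_def, ← ENNReal.ofReal_tsum_of_nonneg hG_nonneg hG_sum]
    exact ENNReal.ofReal_ne_top
  have hTail : Tendsto (fun N : ℕ => ∑' k : ℕ, E (k + N)) atTop (nhds 0) :=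
    ENNReal.tendsto_sum_nat_add E hE_ne_top
  -- bound the sum of diameters
  have hsum : ∀ N : ℕ, (∑' i : ℕ × ℕ, EMetric.diam (t N i) ^ s) ≤ ∑' k : ℕ, E (k + N) := by
    intro N
    have hterm : ∀ q p : ℕ, EMetric.diam (t N (q, p)) ^ s ≤
        (if N ≤ q ∧ p ≤ q then ENNReal.ofReal ((2 * (q : ℝ) ^ (-a)) ^ s) else 0) := by
      intro q p
      by_cases h : N ≤ q ∧ p ≤ q
      · simp only [ht_def, h, and_self, if_true]
        have hrad : (0 : ℝ) ≤ (q : ℝ) ^ (-a) := Real.rpow_nonneg (Nat.cast_nonneg q) _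
        have hdiam : EMetric.diam (Metric.closedBall ((p : ℝ) / q) ((q : ℝ) ^ (-a))) ≤
            ENNReal.ofReal (2 * (q : ℝ) ^ (-a)) := by
          refine EMetric.diam_le fun x hx y hy => ?_
          rw [edist_dist]
          refine ENNReal.ofReal_le_ofReal ?_
          have hx' := Metric.mem_closedBall.1 hx
          have hy' := Metric.mem_closedBall.1 hy
          calc dist x y ≤ dist x ((p : ℝ) / q) + dist y ((p : ℝ) / q) := dist_triangle_right _ _ _
            _ ≤ 2 * (q : ℝ) ^ (-a) := by linarith
        calc EMetric.diam (Metric.closedBall ((p : ℝ) / q) ((q : ℝ) ^ (-a))) ^ s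
            ≤ (ENNReal.ofReal (2 * (q : ℝ) ^ (-a))) ^ s := ENNReal.rpow_le_rpow hdiam hs0.le
          _ = ENNReal.ofReal ((2 * (q : ℝ) ^ (-a)) ^ s) :=
              ENNReal.ofReal_rpow_of_nonneg (by positivity) hs0.le
      · simp only [ht_def, h, if_false]
        rw [EMetric.diam, Metric.ediam_empty, ENNReal.zero_rpow_of_pos hs0]
    calc (∑' i : ℕ × ℕ, EMetric.diam (t N i) ^ s)
        ≤ ∑' i : ℕ × ℕ, (if N ≤ i.1 ∧ i.2 ≤ i.1 then
            ENNReal.ofReal ((2 * (i.1 : ℝ) ^ (-a)) ^ s) else 0) :=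
          ENNReal.tsum_le_tsum fun i => hterm i.1 i.2
      _ = ∑' q : ℕ, ∑' p : ℕ, (if N ≤ q ∧ p ≤ q then
            ENNReal.ofReal ((2 * (q : ℝ) ^ (-a)) ^ s) else 0) := ENNReal.tsum_prod'
      _ = ∑' q : ℕ, (if N ≤ q then E q else 0) := by
          refine tsum_congr fun q => ?_
          by_cases hNq : N ≤ q
          · simp only [hNq, true_and, if_true]
            rw [tsum_eq_sum (s := Finset.range (q + 1)) (fun p hp => by
              rw [Finset.mem_range, Nat.lt_succ_iff, not_le] at hp
              simp [Nat.not_le.2 hp])]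
            have : ∀ p ∈ Finset.range (q + 1),
                (if p ≤ q then ENNReal.ofReal ((2 * (q : ℝ) ^ (-a)) ^ s) else 0) =
                ENNReal.ofReal ((2 * (q : ℝ) ^ (-a)) ^ s) := by
              intro p hp
              rw [Finset.mem_range, Nat.lt_succ_iff] at hp
              simp [hp]
            rw [Finset.sum_congr rfl this, Finset.sum_const, Finset.card_range, nsmul_eq_mul]
            rw [hE_def]
            simp only [hG_def]
            rw [ENNReal.ofReal_mul (by positivity)]
            congr 1
            rw [show ((q : ℝ) + 1) = ((q + 1 : ℕ) : ℝ) by push_cast; ring,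
              ENNReal.ofReal_natCast]
          · simp [hNq]
      _ = ∑' k : ℕ, E (k + N) := by
          have hinj : Function.Injective (fun k : ℕ => k + N) := add_left_injective N
          have hsupp : Function.support (fun q => if N ≤ q then E q else 0) ⊆
              Set.range (fun k : ℕ => k + N) := by
            intro q hq
            simp only [Function.mem_support] at hq
            by_cases hNq : N ≤ q
            · exact ⟨q - N, by simpa using Nat.sub_add_cancel hNq⟩
            · simp [hNq] at hq
          have := Function.Injective.tsum_eq hinj
            (f := fun q => if N ≤ q then E q else 0) hsupp
          rw [← this]
          exact tsum_congr fun k => by simp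
  -- conclude
  have hle := MeasureTheory.Measure.hausdorffMeasure_le_liminf_tsum s (W τ) r hr t ht
    (Eventually.of_forall hst)
  have hliminf : liminf (fun N : ℕ => ∑' i : ℕ × ℕ, EMetric.diam (t N i) ^ s) atTop ≤
      liminf (fun N : ℕ => ∑' k : ℕ, E (k + N)) atTop :=
    liminf_le_liminf (Eventually.of_forall hsum)
  have h0 : liminf (fun N : ℕ => ∑' k : ℕ, E (k + N)) atTop = 0 := hTail.liminf_eq
  exact le_zero_iff.1 (hle.trans (hliminf.trans_eq h0))

/-- Upper bound in the Jarník–Besicovitch theorem: for `τ > 1` and `s > 2/(τ+1)`,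
`H^s(W(τ)) = 0`, and hence `dimH W(τ) ≤ 2/(τ+1)`. -/
theorem JB_upper (τ : ℝ) (hτ : 1 < τ) :
    (∀ s : ℝ, 2 / (τ + 1) < s → μH[s] (W τ) = 0) ∧
      dimH (W τ) ≤ ENNReal.ofReal (2 / (τ + 1)) := by
  have hmeas : ∀ s : ℝ, 2 / (τ + 1) < s → μH[s] (W τ) = 0 := fun s hs =>
    JB_measure_zero hτ hs
  refine ⟨hmeas, ?_⟩
  refine dimH_le fun d' hd' => ?_
  by_contra h
  push_neg at h
  have hc0 : (0 : ℝ) ≤ 2 / (τ + 1) := by positivity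
  have hc : 2 / (τ + 1) < (d' : ℝ) := by
    rw [ENNReal.ofReal_lt_iff_lt_toReal (by exact_mod_cast hc0) ENNReal.coe_ne_top] at h
    · simpa using h
  rw [hmeas d' hc] at hd'
  simp at hd'
end

section
/- The set of Liouville numbers has Hausdorff dimension zero. -/
open MeasureTheory

open scoped Filter ENNReal Topology NNReal
open Filter Set Metric Real

/-- Every Liouville number is, up to an integer translation, a number in `[0,1)` that is
frequently well-approximated with exponent `r` by rationals `a / b` with `0 ≤ a ≤ b`. -/
theorem liouville_subset_aux (r : ℝ) (hr : 1 ≤ r) :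
    { x : ℝ | Liouville x } ⊆
      ⋃ m : ℤ, (· + (m : ℝ)) ⁻¹'
        { x : ℝ | ∃ᶠ b : ℕ in atTop, ∃ a ∈ Finset.Icc (0 : ℤ) b,
          |x - (a : ℤ) / b| < 1 / (b : ℝ) ^ r } := by
  rintro x hx
  have hxp : LiouvilleWith (r + 1) x := hx.liouvilleWith _
  suffices ∀ y : ℝ, LiouvilleWith (r + 1) y → y ∈ Ico (0 : ℝ) 1 → ∃ᶠ b : ℕ in atTop,
      ∃ a ∈ Finset.Icc (0 : ℤ) b, |y - a / b| < 1 / (b : ℝ) ^ r by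
    simp only [mem_iUnion, mem_preimage]
    have hx01 : x + ↑(-⌊x⌋) ∈ Ico (0 : ℝ) 1 := by
      simp only [Int.floor_le, Int.lt_floor_add_one, add_neg_lt_iff_le_add', zero_add, and_self_iff,
        mem_Ico, Int.cast_neg, le_add_neg_iff_add_le]
    exact ⟨-⌊x⌋, this _ (hxp.add_int _) hx01⟩
  clear hxp hx x; intro x hxp hx01
  refine ((hxp.frequently_lt_rpow_neg (lt_add_one r)).and_eventually
    (eventually_ge_atTop 1)).mono ?_
  rintro b ⟨⟨a, -, hlt⟩, hb⟩
  rw [rpow_neg b.cast_nonneg, ← one_div] at hlt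
  refine ⟨a, ?_, hlt⟩
  replace hb : (1 : ℝ) ≤ b := Nat.one_le_cast.2 hb
  have hb0 : (0 : ℝ) < b := zero_lt_one.trans_le hb
  replace hlt : |x - a / b| < 1 / b := by
    refine hlt.trans_le (one_div_le_one_div_of_le hb0 ?_)
    calc
      (b : ℝ) = (b : ℝ) ^ (1 : ℝ) := (rpow_one _).symm
      _ ≤ (b : ℝ) ^ r := rpow_le_rpow_of_exponent_le hb hr
  rw [sub_div' hb0.ne', abs_div, abs_of_pos hb0, div_lt_div_iff_of_pos_right hb0,
    abs_sub_lt_iff, sub_lt_iff_lt_add, sub_lt_iff_lt_add, ← sub_lt_iff_lt_add'] at hlt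
  rw [Finset.mem_Icc, ← Int.lt_add_one_iff, ← Int.lt_add_one_iff, ← neg_lt_iff_pos_add, add_comm, ←
    @Int.cast_lt ℝ, ← @Int.cast_lt ℝ]
  push_cast
  refine ⟨lt_of_le_of_lt ?_ hlt.1, hlt.2.trans_le ?_⟩
  · simp only [mul_nonneg hx01.left b.cast_nonneg, neg_le_sub_iff_le_add, le_add_iff_nonneg_left]
  · rw [add_le_add_iff_left]
    exact mul_le_of_le_one_left hb0.le hx01.2.le

/-- The `s`-dimensional Hausdorff measure of the set of numbers in which are frequently
well-approximated with exponent `r` by rationals `a / b` with `0 ≤ a ≤ b` vanishes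
provided `r * s > 2`. -/
theorem hausdorffMeasure_freq_approx_zero (r : ℝ) (s : ℝ≥0) (hr : 1 ≤ r) (hs : 0 < s)
    (hrs : 2 < r * s) :
    μH[(s : ℝ)] { x : ℝ | ∃ᶠ b : ℕ in atTop, ∃ a ∈ Finset.Icc (0 : ℤ) b,
      |x - (a : ℤ) / b| < 1 / (b : ℝ) ^ r } = 0 := by
  have hr0 : 0 < r := zero_lt_one.trans_le hr
  -- the basic covering sets
  set B : ℕ → ℕ → Set ℝ := fun b a => ball ((a : ℝ) / b) (1 / (b : ℝ) ^ r) with hB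
  set t : ℕ → ℕ × ℕ → Set ℝ := fun N p =>
    if p.2 ≤ p.1 + N then B (p.1 + N) p.2 else ∅ with ht
  -- diameter bound
  have hdiam : ∀ b a, EMetric.diam (B b a) ≤ 2 * ENNReal.ofReal (1 / (b : ℝ) ^ r) := by
    intro b a
    show EMetric.diam (ball ((a : ℝ) / b) (1 / (b : ℝ) ^ r)) ≤ _
    rw [← Metric.emetric_ball]
    exact EMetric.diam_ball
  set c : ℕ → ℝ≥0∞ := fun b => (b + 1) * (2 * ENNReal.ofReal (1 / (b : ℝ) ^ r)) ^ (s : ℝ)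
    with hc
  have key := Measure.hausdorffMeasure_le_liminf_tsum (β := ℕ) (ι := fun _ => ℕ × ℕ) (s : ℝ)
    { x : ℝ | ∃ᶠ b : ℕ in atTop, ∃ a ∈ Finset.Icc (0 : ℤ) b,
      |x - (a : ℤ) / b| < 1 / (b : ℝ) ^ r }
    (l := atTop) (fun N => 2 * ENNReal.ofReal (1 / (N : ℝ) ^ r)) ?_ t ?_ ?_
  · -- conclude : the liminf is 0
    have hsum : ∑' b, c b ≠ ∞ := by
      have hbound : ∀ b, c b ≤ 2 ^ ((s : ℝ) + 1) * ENNReal.ofReal ((b : ℝ) ^ (1 - r * s)) := by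
        intro b
        rcases Nat.eq_zero_or_pos b with hb | hb
        · subst hb
          have h0 : ENNReal.ofReal (1 / ((0 : ℕ) : ℝ) ^ r) = 0 := by
            simp [Real.zero_rpow hr0.ne']
          simp only [hc, h0, mul_zero]
          rw [ENNReal.zero_rpow_of_pos (by exact_mod_cast hs), mul_zero]
          exact zero_le
        · have hb1 : (1 : ℝ) ≤ b := Nat.one_le_cast.2 hb
          have hb0 : (0 : ℝ) < b := zero_lt_one.trans_le hb1
          have hbr : (0 : ℝ) < (b : ℝ) ^ r := rpow_pos_of_pos hb0 _
          simp only [hc]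
          have hinv : (1 : ℝ) / (b : ℝ) ^ r = (b : ℝ) ^ (-r) := by
            rw [Real.rpow_neg hb0.le, one_div]
          have h1 : (2 * ENNReal.ofReal (1 / (b : ℝ) ^ r)) ^ (s : ℝ) =
              2 ^ (s : ℝ) * ENNReal.ofReal ((b : ℝ) ^ (-(r * s))) := by
            rw [ENNReal.mul_rpow_of_nonneg _ _ s.coe_nonneg]
            congr 1
            rw [hinv, ENNReal.ofReal_rpow_of_pos (rpow_pos_of_pos hb0 _),
              ← Real.rpow_mul hb0.le, neg_mul]
          rw [h1]
          have h2 : ((b : ℝ≥0∞) + 1) ≤ 2 * (b : ℝ≥0∞) := by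
            rw [two_mul]
            gcongr
            exact_mod_cast Nat.one_le_cast.2 hb
          calc ((b : ℝ≥0∞) + 1) * (2 ^ (s : ℝ) * ENNReal.ofReal ((b : ℝ) ^ (-(r * s))))
              ≤ 2 * (b : ℝ≥0∞) * (2 ^ (s : ℝ) * ENNReal.ofReal ((b : ℝ) ^ (-(r * s)))) := by
                gcongr
            _ = 2 ^ ((s : ℝ) + 1) * ((b : ℝ≥0∞) * ENNReal.ofReal ((b : ℝ) ^ (-(r * s)))) := by
                rw [ENNReal.rpow_add _ _ two_ne_zero ENNReal.ofNat_ne_top, ENNReal.rpow_one]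
                ring
            _ = 2 ^ ((s : ℝ) + 1) * ENNReal.ofReal ((b : ℝ) ^ (1 - r * s)) := by
                congr 1
                rw [← ENNReal.ofReal_natCast, ← ENNReal.ofReal_mul (Nat.cast_nonneg b)]
                congr 1
                rw [sub_eq_add_neg, Real.rpow_add hb0, Real.rpow_one]
      refine ne_top_of_le_ne_top ?_ (ENNReal.tsum_le_tsum hbound)
      rw [ENNReal.tsum_mul_left]
      refine ENNReal.mul_ne_top (by simp [ENNReal.rpow_ne_top_of_nonneg]) ?_
      rw [← ENNReal.ofReal_tsum_of_nonneg (fun n => Real.rpow_nonneg (Nat.cast_nonneg n) _)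
        (Real.summable_nat_rpow.2 (by nlinarith [s.coe_nonneg]))]
      exact ENNReal.ofReal_ne_top
    have htail : Tendsto (fun N => ∑' i : ℕ, c (i + N)) atTop (𝓝 0) :=
      ENNReal.tendsto_sum_nat_add c hsum
    refine le_antisymm (key.trans ?_) zero_le
    have hle : ∀ N : ℕ, (∑' i : ℕ × ℕ, EMetric.diam (t N i) ^ (s : ℝ)) ≤
        ∑' i : ℕ, c (i + N) := by
      intro N
      have hprod : (∑' i : ℕ × ℕ, EMetric.diam (t N i) ^ (s : ℝ)) =
          ∑' i : ℕ, ∑' a : ℕ, EMetric.diam (t N (i, a)) ^ (s : ℝ) :=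
        ENNReal.tsum_prod (f := fun i a => EMetric.diam (t N (i, a)) ^ (s : ℝ))
      rw [hprod]
      refine ENNReal.tsum_le_tsum fun i => ?_
      -- inner sum over a
      have hpt : ∀ a : ℕ, EMetric.diam (t N (i, a)) ^ (s : ℝ) ≤
          if a ∈ Finset.range (i + N + 1) then
            (2 * ENNReal.ofReal (1 / ((i + N : ℕ) : ℝ) ^ r)) ^ (s : ℝ) else 0 := by
        intro a
        by_cases ha : a ≤ i + N
        · rw [if_pos (Finset.mem_range.2 (Nat.lt_succ_of_le ha))]
          simp only [ht, if_pos ha]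
          exact ENNReal.rpow_le_rpow (hdiam _ _) s.coe_nonneg
        · rw [if_neg (fun h => ha (Nat.lt_succ_iff.1 (Finset.mem_range.1 h)))]
          simp only [ht, if_neg ha, EMetric.diam_empty]
          rw [show EMetric.diam (∅ : Set ℝ) = 0 from Metric.ediam_empty, ENNReal.zero_rpow_of_pos (by exact_mod_cast hs)]
      calc (∑' a : ℕ, EMetric.diam (t N (i, a)) ^ (s : ℝ))
          ≤ ∑' a : ℕ, if a ∈ Finset.range (i + N + 1) then
              (2 * ENNReal.ofReal (1 / ((i + N : ℕ) : ℝ) ^ r)) ^ (s : ℝ) else 0 :=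
            ENNReal.tsum_le_tsum hpt
        _ = ∑ a ∈ Finset.range (i + N + 1),
              (2 * ENNReal.ofReal (1 / ((i + N : ℕ) : ℝ) ^ r)) ^ (s : ℝ) :=
            (tsum_eq_sum (fun a ha => if_neg ha)).trans
              (Finset.sum_congr rfl fun a ha => if_pos ha)
        _ = c (i + N) := by
            rw [hc, Finset.sum_const, Finset.card_range, nsmul_eq_mul]
            push_cast
            ring
    calc liminf (fun N => ∑' i : ℕ × ℕ, EMetric.diam (t N i) ^ (s : ℝ)) atTop
        ≤ liminf (fun N => ∑' i : ℕ, c (i + N)) atTop :=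
          liminf_le_liminf (Eventually.of_forall hle)
      _ = 0 := htail.liminf_eq
  · -- the diameters tend to 0
    have h1 : Tendsto (fun N : ℕ => 1 / (N : ℝ) ^ r) atTop (𝓝 0) := by
      simp only [one_div]
      exact ((tendsto_rpow_atTop hr0).comp tendsto_natCast_atTop_atTop).inv_tendsto_atTop
    have h2 : Tendsto (fun N : ℕ => 2 * ENNReal.ofReal (1 / (N : ℝ) ^ r)) atTop
        (𝓝 (2 * ENNReal.ofReal 0)) :=
      ENNReal.Tendsto.const_mul (ENNReal.tendsto_ofReal h1)
        (Or.inr ENNReal.ofNat_ne_top)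
    simpa using h2
  · -- diameters bounded
    filter_upwards [eventually_ge_atTop 1] with N hN i
    simp only [ht]
    split_ifs with hi
    · refine (hdiam _ _).trans ?_
      refine mul_le_mul_right (ENNReal.ofReal_le_ofReal ?_) 2
      have hN1 : (1 : ℝ) ≤ (N : ℝ) := Nat.one_le_cast.2 hN
      have h1 : (0 : ℝ) < (N : ℝ) ^ r := rpow_pos_of_pos (by linarith) _
      refine one_div_le_one_div_of_le h1 ?_
      refine Real.rpow_le_rpow (by linarith) ?_ hr0.le
      exact_mod_cast Nat.le_add_left N i.1
    · simp
  · -- coverage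
    refine Eventually.of_forall fun N => fun x hx => ?_
    rcases ((hx.and_eventually (eventually_ge_atTop (max N 1))).exists) with
      ⟨b, ⟨a, haI, hab⟩, hbN⟩
    rw [Finset.mem_Icc] at haI
    have hbN' : N ≤ b := le_trans (le_max_left _ _) hbN
    refine mem_iUnion.2 ⟨(b - N, a.toNat), ?_⟩
    have hba : b - N + N = b := Nat.sub_add_cancel hbN'
    have hab' : a.toNat ≤ b := by
      have := haI.2
      omega
    simp only [ht]
    rw [hba, if_pos hab']
    show x ∈ ball ((a.toNat : ℝ) / b) (1 / (b : ℝ) ^ r)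
    rw [mem_ball, Real.dist_eq]
    have hcast : ((a.toNat : ℕ) : ℝ) = (a : ℝ) := by
      exact_mod_cast Int.toNat_of_nonneg haI.1
    rw [hcast]
    exact hab

/-- The set of Liouville numbers has Hausdorff dimension zero. -/
theorem dimH_liouville : dimH {x : ℝ | Liouville x} = 0 := by
  refine le_antisymm ?_ zero_le
  refine ENNReal.le_of_forall_pos_le_add fun ε hε _ => ?_
  rw [zero_add]
  set r : ℝ := max 1 (3 / (ε : ℝ)) with hrdef
  have hr : 1 ≤ r := le_max_left _ _
  have hεR : (0 : ℝ) < ε := hε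
  have hrs : 2 < r * ε := by
    have : (3 / (ε : ℝ)) * ε ≤ r * ε := by
      gcongr
      exact le_max_right _ _
    rw [div_mul_cancel₀ _ hεR.ne'] at this
    linarith
  have h0 : μH[(ε : ℝ)] {x : ℝ | Liouville x} = 0 := by
    refine measure_mono_null (liouville_subset_aux r hr) ?_
    rw [measure_iUnion_null_iff]
    intro m
    have hiso : Isometry (· + (m : ℝ)) := Isometry.of_dist_eq fun x y => by
      simp [Real.dist_eq]
    rw [hiso.hausdorffMeasure_preimage (Or.inl ε.coe_nonneg)]
    exact measure_mono_null Set.inter_subset_left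
      (hausdorffMeasure_freq_approx_zero r ε hr hε hrs)
  exact dimH_le_of_hausdorffMeasure_ne_top (by rw [h0]; exact ENNReal.zero_ne_top)
end

section
/- Let ψ : ℕ → [0,∞) and s ∈ (0,1]. If the series ∑_{r=1}^∞ r·(ψ(r)/r)^s converges, then the s-dimensional Hausdorff measure of W(ψ) = {x ∈ [0,1) : ‖r·x‖ < ψ(r) for infinitely many r ∈ ℕ} is zero. -/
open MeasureTheory

/-- The set of `ψ`-well approximable numbers in `[0,1)`. -/
def Wpsi (ψ : ℕ → ℝ) : Set ℝ :=
  {x : ℝ | x ∈ Set.Ico (0 : ℝ) 1 ∧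
    {r : ℕ | 0 < r ∧ distNearestInt ((r : ℝ) * x) < ψ r}.Infinite}

/-- Convergence part of the Khintchine–Jarník theorem: if `∑ r (ψ(r)/r)^s < ∞` then
`H^s(W(ψ)) = 0`. -/
theorem khintchine_jarnik_convergence (ψ : ℕ → ℝ) (hψ : ∀ r, 0 ≤ ψ r)
    (s : ℝ) (hs0 : 0 < s) (hs1 : s ≤ 1)
    (hsum : Summable fun r : ℕ => (r : ℝ) * (ψ r / r) ^ s) :
    μH[s] (Wpsi ψ) = 0 := by
  classical
  open Filter ENNReal in
  -- nonnegativity of the summand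
  have hqnn : ∀ j : ℕ, (0:ℝ) ≤ ψ j / j := fun j => div_nonneg (hψ j) (Nat.cast_nonneg j)
  have htermnn : ∀ j : ℕ, (0:ℝ) ≤ (j : ℝ) * (ψ j / j) ^ s := fun j =>
    mul_nonneg (Nat.cast_nonneg j) (Real.rpow_nonneg (hqnn j) s)
  -- terms tend to 0
  have hterm0 : Filter.Tendsto (fun j : ℕ => (j : ℝ) * (ψ j / j) ^ s) atTop (nhds 0) :=
    hsum.tendsto_atTop_zero
  -- (ψ j / j) ^ s → 0
  have hpow0 : Filter.Tendsto (fun j : ℕ => (ψ j / j) ^ s) atTop (nhds 0) := by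
    refine squeeze_zero (fun j => Real.rpow_nonneg (hqnn j) s) (fun j => ?_) hterm0
    rcases Nat.eq_zero_or_pos j with rfl | hj
    · simp [Real.zero_rpow hs0.ne']
    · have hj1 : (1:ℝ) ≤ (j:ℝ) := by exact_mod_cast hj
      exact le_mul_of_one_le_left (Real.rpow_nonneg (hqnn j) s) hj1
  -- ψ j / j → 0
  have hq0 : Filter.Tendsto (fun j : ℕ => ψ j / j) atTop (nhds 0) := by
    have hcont : Filter.Tendsto (fun y : ℝ => y ^ s⁻¹) (nhds 0) (nhds 0) := by
      have h := (Real.continuousAt_rpow_const 0 s⁻¹ (Or.inr (inv_nonneg.mpr hs0.le))).tendsto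
      rwa [Real.zero_rpow (inv_ne_zero hs0.ne')] at h
    have := hcont.comp hpow0
    refine this.congr' ?_
    filter_upwards [Filter.eventually_ge_atTop 1] with j hj
    simp only [Function.comp]
    rw [← Real.rpow_mul (hqnn j), mul_inv_cancel₀ hs0.ne', Real.rpow_one]
  -- the real tail function
  set g : ℕ → ℝ := fun j => ((j : ℝ) + 1) * (2 * ψ j / j) ^ s with hgdef
  have hgnn : ∀ j, 0 ≤ g j := fun j =>
    mul_nonneg (by positivity)
      (Real.rpow_nonneg (div_nonneg (by linarith [hψ j]) (Nat.cast_nonneg j)) s)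
  have hgsum : Summable g := by
    refine Summable.of_nonneg_of_le hgnn (fun j => ?_) ((hsum.mul_left (2 * 2 ^ s)))
    rcases Nat.eq_zero_or_pos j with rfl | hj
    · simp [hgdef, Real.zero_rpow hs0.ne']
    · have h1 : (2 * ψ j / j : ℝ) = 2 * (ψ j / j) := by ring
      have h2 : (2 * (ψ j / j) : ℝ) ^ s = 2 ^ s * (ψ j / j) ^ s :=
        Real.mul_rpow (by norm_num) (hqnn j)
      have hj1 : (1:ℝ) ≤ (j:ℝ) := by exact_mod_cast hj
      have : ((j:ℝ) + 1) ≤ 2 * j := by linarith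
      calc g j = ((j:ℝ) + 1) * (2 ^ s * (ψ j / j) ^ s) := by rw [hgdef]; simp [h1, h2]
        _ ≤ (2 * j) * (2 ^ s * (ψ j / j) ^ s) := by
            apply mul_le_mul_of_nonneg_right this
            exact mul_nonneg (Real.rpow_nonneg (by norm_num) s) (Real.rpow_nonneg (hqnn j) s)
        _ = 2 * 2 ^ s * ((j:ℝ) * (ψ j / j) ^ s) := by ring
  -- ennreal version
  set G : ℕ → ℝ≥0∞ := fun j => ENNReal.ofReal (g j) with hGdef
  have hGsum : ∑' j, G j ≠ ∞ := by
    rw [← ENNReal.ofReal_tsum_of_nonneg hgnn hgsum]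
    exact ENNReal.ofReal_ne_top
  have hGtail : Filter.Tendsto (fun N : ℕ => ∑' k, G (k + N)) atTop (nhds 0) :=
    ENNReal.tendsto_sum_nat_add G hGsum
  -- choose cutoffs
  have hM : ∀ n : ℕ, ∃ M : ℕ, n ≤ M ∧ ∀ j, M ≤ j → ψ j / j ≤ 1 / (2 * (n + 1)) := by
    intro n
    have : ∀ᶠ j in atTop, ψ j / j ≤ 1 / (2 * ((n:ℝ) + 1)) := by
      have hpos : (0:ℝ) < 1 / (2 * ((n:ℝ) + 1)) := by positivity
      filter_upwards [hq0.eventually_lt_const hpos] with j hj using hj.le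
    rcases (this.and (Filter.eventually_ge_atTop n)).exists_forall_of_atTop with ⟨M, hM⟩
    exact ⟨max M n, le_max_right _ _, fun j hj => ((hM j (le_trans (le_max_left _ _) hj)).1)⟩
  choose M hMn hMs using hM
  -- the coverings
  set t : ∀ n : ℕ, (Σ k : ℕ, Fin (k + M n + 1)) → Set ℝ := fun n i =>
    if 1 ≤ i.1 + M n then
      Metric.closedBall ((i.2 : ℝ) / ((i.1 + M n : ℕ) : ℝ))
        (ψ (i.1 + M n) / ((i.1 + M n : ℕ) : ℝ))
    else ∅ with htdef
  have hball : ∀ (j : ℕ) (c : ℝ), EMetric.diam (Metric.closedBall c (ψ j / (j:ℝ)))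
      ≤ ENNReal.ofReal (2 * (ψ j / (j:ℝ))) := by
    intro j c
    refine EMetric.diam_le fun x hx y hy => ?_
    rw [edist_dist]
    refine ENNReal.ofReal_le_ofReal ?_
    have hx' := Metric.mem_closedBall.mp hx
    have hy' := Metric.mem_closedBall.mp hy
    calc dist x y ≤ dist x c + dist c y := dist_triangle _ _ _
      _ ≤ ψ j / j + ψ j / j := add_le_add hx' (dist_comm c y ▸ hy')
      _ = 2 * (ψ j / j) := by ring
  -- diameter bounds
  have hdiam : ∀ n (i : Σ k : ℕ, Fin (k + M n + 1)),
      EMetric.diam (t n i) ≤ ENNReal.ofReal (1 / ((n:ℝ) + 1)) := by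
    rintro n ⟨k, p⟩
    simp only [htdef]
    by_cases h : 1 ≤ k + M n
    · rw [if_pos h]
      refine (hball (k + M n) _).trans (ENNReal.ofReal_le_ofReal ?_)
      have := hMs n (k + M n) (Nat.le_add_left _ _)
      calc 2 * (ψ (k + M n) / ((k + M n : ℕ):ℝ)) ≤ 2 * (1 / (2 * ((n:ℝ) + 1))) :=
            mul_le_mul_of_nonneg_left this (by norm_num)
        _ = 1 / ((n:ℝ) + 1) := by field_simp
    · rw [if_neg h]; simp [EMetric.diam]
  -- covering property
  have hcover : ∀ n, Wpsi ψ ⊆ ⋃ i, t n i := by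
    intro n x hx
    obtain ⟨⟨hx0, hx1⟩, hinf⟩ := hx
    obtain ⟨j, hjmem, hjlt⟩ := hinf.exists_gt (M n)
    obtain ⟨hjpos, hjdist⟩ := hjmem
    have hjM : M n ≤ j := hjlt.le
    have hj1 : (1:ℝ) ≤ (j:ℝ) := by exact_mod_cast hjpos
    have hjpos' : (0:ℝ) < (j:ℝ) := by linarith
    set m : ℤ := round ((j:ℝ) * x) with hm
    have hjx0 : (0:ℝ) ≤ (j:ℝ) * x := mul_nonneg hjpos'.le hx0
    have hjx1 : (j:ℝ) * x < (j:ℝ) := by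
      calc (j:ℝ) * x < (j:ℝ) * 1 := mul_lt_mul_of_pos_left hx1 hjpos'
        _ = (j:ℝ) := mul_one _
    have hm0 : 0 ≤ m := by
      have h1 : (j:ℝ) * x - 1/2 < (m:ℝ) := sub_half_lt_round _
      have h2 : (-1 : ℝ) < (m:ℝ) := by linarith
      have h3 : (-1 : ℤ) < m := by exact_mod_cast h2
      omega
    have hmj : m ≤ (j:ℤ) := by
      have h1 : (m:ℝ) ≤ (j:ℝ) * x + 1/2 := round_le_add_half _
      have h2 : (m:ℝ) < (j:ℝ) + 1 := by linarith
      have h3 : m < (j:ℤ) + 1 := by exact_mod_cast h2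
      omega
    have hmnat : m.toNat ≤ j := by omega
    have hkj : (j - M n) + M n = j := Nat.sub_add_cancel hjM
    have hdist : dist x ((m:ℝ) / (j:ℝ)) ≤ ψ j / (j:ℝ) := by
      have hxe : x - (m:ℝ)/(j:ℝ) = ((j:ℝ)*x - (m:ℝ))/(j:ℝ) := by field_simp
      rw [Real.dist_eq, hxe, abs_div, abs_of_pos hjpos']
      gcongr
      exact hjdist.le
    refine Set.mem_iUnion.mpr ⟨⟨j - M n, ⟨m.toNat, by omega⟩⟩, ?_⟩
    simp only [htdef]
    rw [if_pos (by omega : 1 ≤ (j - M n) + M n)]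
    show x ∈ Metric.closedBall (((m.toNat : ℕ) : ℝ) / (((j - M n) + M n : ℕ) : ℝ))
      (ψ ((j - M n) + M n) / (((j - M n) + M n : ℕ) : ℝ))
    rw [hkj, Metric.mem_closedBall]
    have hc : ((m.toNat : ℕ) : ℝ) = (m:ℝ) := by exact_mod_cast Int.toNat_of_nonneg hm0
    rw [hc]
    exact hdist
  -- scales tend to zero
  have hr0 : Filter.Tendsto (fun n : ℕ => ENNReal.ofReal (1 / ((n:ℝ) + 1))) atTop (nhds 0) := by
    rw [← ENNReal.ofReal_zero]
    exact (ENNReal.continuous_ofReal.tendsto 0).comp tendsto_one_div_add_atTop_nhds_zero_nat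
  have key := MeasureTheory.Measure.hausdorffMeasure_le_liminf_tsum s (Wpsi ψ)
      (fun n : ℕ => ENNReal.ofReal (1 / ((n:ℝ) + 1))) hr0 t
      (Filter.Eventually.of_forall hdiam) (Filter.Eventually.of_forall hcover)
  -- bound the covering sums
  have hsumle : ∀ n, (∑' i : Σ k : ℕ, Fin (k + M n + 1), EMetric.diam (t n i) ^ s)
      ≤ ∑' k, G (k + M n) := by
    intro n
    rw [ENNReal.tsum_sigma']
    refine ENNReal.tsum_le_tsum fun k => ?_
    have hterm : ∀ p : Fin (k + M n + 1), EMetric.diam (t n ⟨k, p⟩) ^ s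
        ≤ ENNReal.ofReal ((2 * ψ (k + M n) / ((k + M n : ℕ):ℝ)) ^ s) := by
      intro p
      simp only [htdef]
      by_cases h : 1 ≤ k + M n
      · rw [if_pos h]
        have h1 : 2 * ψ (k + M n) / ((k + M n : ℕ):ℝ)
            = 2 * (ψ (k + M n) / ((k + M n : ℕ):ℝ)) := by ring
        calc EMetric.diam (Metric.closedBall ((p:ℝ) / ((k + M n : ℕ):ℝ))
              (ψ (k + M n) / ((k + M n : ℕ):ℝ))) ^ s
            ≤ (ENNReal.ofReal (2 * (ψ (k + M n) / ((k + M n : ℕ):ℝ)))) ^ s :=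
              ENNReal.rpow_le_rpow (hball _ _) hs0.le
          _ = ENNReal.ofReal ((2 * ψ (k + M n) / ((k + M n : ℕ):ℝ)) ^ s) := by
              rw [ENNReal.ofReal_rpow_of_nonneg
                (mul_nonneg (by norm_num) (hqnn (k + M n))) hs0.le, h1]
      · rw [if_neg h]
        simp only [EMetric.diam, Metric.ediam_empty, ENNReal.zero_rpow_of_pos hs0]
        exact zero_le
    calc (∑' p : Fin (k + M n + 1), EMetric.diam (t n ⟨k, p⟩) ^ s)
        ≤ ∑' _p : Fin (k + M n + 1),
            ENNReal.ofReal ((2 * ψ (k + M n) / ((k + M n : ℕ):ℝ)) ^ s) :=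
          ENNReal.tsum_le_tsum hterm
      _ = ((k + M n + 1 : ℕ) : ℝ≥0∞)
            * ENNReal.ofReal ((2 * ψ (k + M n) / ((k + M n : ℕ):ℝ)) ^ s) := by
          rw [tsum_fintype]
          simp [Finset.sum_const, Finset.card_univ, nsmul_eq_mul]
      _ ≤ G (k + M n) := by
          refine le_of_eq ?_
          simp only [hGdef, hgdef]
          rw [ENNReal.ofReal_mul (by positivity)]
          congr 1
          rw [← ENNReal.ofReal_natCast]
          congr 1
          push_cast
          ring
  -- the tails tend to zero
  have hMtop : Filter.Tendsto M atTop atTop :=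
    Filter.tendsto_atTop_mono hMn Filter.tendsto_id
  have htail : Filter.Tendsto (fun n => ∑' k, G (k + M n)) atTop (nhds 0) :=
    hGtail.comp hMtop
  refine le_antisymm ?_ zero_le
  calc μH[s] (Wpsi ψ)
      ≤ Filter.liminf (fun n => ∑' i : Σ k : ℕ, Fin (k + M n + 1),
          EMetric.diam (t n i) ^ s) atTop := key
    _ ≤ Filter.liminf (fun n => ∑' k, G (k + M n)) atTop :=
        Filter.liminf_le_liminf (Filter.Eventually.of_forall hsumle)
    _ = 0 := htail.liminf_eq
end

section
/- Let ψ : ℕ → [0,∞) and s ∈ (0,1]. If ∑_{q=1}^∞ φ(q)·(ψ(q)/q)^s converges, then the s-dimensional Hausdorff measure of W'(ψ) = {x ∈ [0,1) : |q·x − p| < ψ(q) for infinitely many coprime pairs (p,q) ∈ ℤ × ℕ} is zero. -/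
open MeasureTheory
open Filter
open scoped ENNReal

section CountAux
open Finset
lemma coprime_count_le (q : ℕ) (hq : 0 < q) :
    ((Finset.Icc (-(q:ℤ)) (2*q)).filter fun p => Int.gcd p (q:ℤ) = 1).card ≤ 4 * q.totient := by
  haveI : NeZero q := ⟨hq.ne'⟩
  set S := (Finset.Icc (-(q:ℤ)) (2*q)).filter (fun p => Int.gcd p (q:ℤ) = 1) with hS
  have hfiber : ∀ b ∈ S.image (fun p : ℤ => (p : ZMod q)),
      (S.filter fun p : ℤ => ((p : ZMod q) = b)).card ≤ 4 := by
    intro b _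
    have h4 : (Finset.Icc (0:ℤ) 3).card = 4 := by decide
    rw [← h4]
    apply Finset.card_le_card_of_injOn (fun p : ℤ => (p + q) / q)
    · intro p hp
      simp only [hS, Finset.mem_coe, Finset.mem_filter, Finset.mem_Icc] at hp ⊢
      obtain ⟨⟨⟨h1, h2⟩, _⟩, _⟩ := hp
      have hq' : (0:ℤ) < q := by exact_mod_cast hq
      refine ⟨Int.ediv_nonneg (by linarith) hq'.le, ?_⟩
      have h3 : p + q ≤ 3 * q := by linarith
      calc (p + q) / q ≤ 3 * q / q := Int.ediv_le_ediv hq' h3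
        _ = 3 := Int.mul_ediv_cancel 3 hq'.ne'
    · intro p1 h1 p2 h2 hdiv
      simp only [hS, Finset.coe_filter, Set.mem_setOf_eq, Finset.mem_filter] at h1 h2
      have hmod : ((p1 : ZMod q) : ZMod q) = (p2 : ZMod q) := h1.2.trans h2.2.symm
      have hme : p1 % (q:ℤ) = p2 % (q:ℤ) := by
        have := (ZMod.intCast_eq_intCast_iff _ _ _).mp hmod
        exact this
      have e1 : (p1 + q) % (q:ℤ) = (p2 + q) % (q:ℤ) := by
        simp [Int.add_emod, hme]
      have d1 := Int.mul_ediv_add_emod (p1 + q) q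
      have d2 := Int.mul_ediv_add_emod (p2 + q) q
      simp only at hdiv
      have : p1 + q = p2 + q := by
        rw [← d1, ← d2, hdiv, e1]
      linarith
  have hcard := Finset.card_le_mul_card_image S 4 hfiber
  have himg : (S.image (fun p : ℤ => (p : ZMod q))).card ≤ q.totient := by
    have hsub : S.image (fun p : ℤ => (p : ZMod q)) ⊆
        Finset.univ.image ((↑) : (ZMod q)ˣ → ZMod q) := by
      intro b hb
      simp only [Finset.mem_image] at hb ⊢
      obtain ⟨p, hp, rfl⟩ := hb
      simp only [hS, Finset.mem_filter] at hp
      have hcop : IsCoprime p (q:ℤ) := Int.isCoprime_iff_gcd_eq_one.mpr hp.2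
      obtain ⟨a, b', hab⟩ := hcop
      have : (a : ZMod q) * (p : ZMod q) = 1 := by
        have := congrArg (fun z : ℤ => (z : ZMod q)) hab
        push_cast at this
        simpa [ZMod.natCast_self] using this
      exact ⟨⟨(p:ZMod q), a, by rw [mul_comm] at this; exact this, this⟩, Finset.mem_univ _, rfl⟩
    calc (S.image _).card ≤ (Finset.univ.image ((↑) : (ZMod q)ˣ → ZMod q)).card :=
          Finset.card_le_card hsub
      _ ≤ Fintype.card (ZMod q)ˣ := (Finset.card_image_le).trans (by simp)
      _ = q.totient := ZMod.card_units_eq_totient q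
  calc S.card ≤ 4 * (S.image (fun p : ℤ => (p : ZMod q))).card := hcard
    _ ≤ 4 * q.totient := by omega

end CountAux

/-- The Duffin–Schaeffer set `W'(ψ)` of `x ∈ [0,1)` admitting infinitely many coprime
approximations `|q·x − p| < ψ(q)`. -/
def W' (ψ : ℕ → ℝ) : Set ℝ :=
  {x : ℝ | x ∈ Set.Ico (0 : ℝ) 1 ∧
    {pq : ℤ × ℕ | 0 < pq.2 ∧ Int.gcd pq.1 (pq.2 : ℤ) = 1 ∧
      |(pq.2 : ℝ) * x - (pq.1 : ℝ)| < ψ pq.2}.Infinite}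

/-- Convergence half of the Duffin–Schaeffer conjecture for Hausdorff measures:
if `∑ φ(q) (ψ(q)/q)^s < ∞` then `H^s(W'(ψ)) = 0`. -/
theorem duffin_schaeffer_convergence (ψ : ℕ → ℝ) (hψ : ∀ q, 0 ≤ ψ q)
    (s : ℝ) (hs0 : 0 < s) (hs1 : s ≤ 1)
    (hsum : Summable fun q : ℕ => (Nat.totient q : ℝ) * (ψ q / q) ^ s) :
    μH[s] (W' ψ) = 0 := by
  classical
  set f : ℕ → ℝ := fun q => (q.totient : ℝ) * (ψ q / q) ^ s with hfdef
  have hdiv0 : ∀ q : ℕ, (0:ℝ) ≤ ψ q / q := fun q => div_nonneg (hψ q) (Nat.cast_nonneg q)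
  have hf0 : ∀ q, 0 ≤ f q := fun q =>
    mul_nonneg (Nat.cast_nonneg _) (Real.rpow_nonneg (hdiv0 q) s)
  set g : ℕ → ℝ≥0∞ := fun q => ENNReal.ofReal (f q) with hgdef
  have hgsum : ∑' q, g q ≠ ⊤ := by
    rw [← ENNReal.ofReal_tsum_of_nonneg hf0 hsum]; exact ENNReal.ofReal_ne_top
  set T : ℕ → ℝ≥0∞ := fun n => ∑' k, g (k + n) with hTdef
  have hTtend : Tendsto T atTop (nhds 0) := ENNReal.tendsto_sum_nat_add g hgsum
  have hgleT : ∀ {n q : ℕ}, n ≤ q → g q ≤ T n := by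
    intro n q hnq
    have h := ENNReal.le_tsum (f := fun k => g (k + n)) (q - n)
    rwa [Nat.sub_add_cancel hnq] at h
  have htot1 : ∀ {q : ℕ}, 0 < q → (1:ℝ) ≤ q.totient := by
    intro q hq
    exact_mod_cast Nat.one_le_iff_ne_zero.mpr (Nat.totient_pos.mpr hq).ne'
  -- radius bound
  have hradial : ∀ {n q : ℕ}, n ≤ q → 0 < q →
      ENNReal.ofReal (ψ q / q) ≤ T n ^ (1/s) := by
    intro n q hnq hq
    have hb : (0:ℝ) ≤ ψ q / q := hdiv0 q
    have h1 : (ENNReal.ofReal (ψ q / q)) ^ s ≤ T n := by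
      rw [ENNReal.ofReal_rpow_of_nonneg hb hs0.le]
      refine le_trans (ENNReal.ofReal_le_ofReal ?_) (hgleT hnq)
      have h2 := htot1 hq
      have h3 : (0:ℝ) ≤ (ψ q / q) ^ s := Real.rpow_nonneg hb s
      calc (ψ q / q) ^ s = 1 * (ψ q / q) ^ s := (one_mul _).symm
        _ ≤ (q.totient : ℝ) * (ψ q / q) ^ s := by gcongr
    calc ENNReal.ofReal (ψ q / q)
        = ((ENNReal.ofReal (ψ q / q)) ^ s) ^ (1/s) := by
          rw [← ENNReal.rpow_mul, mul_one_div_cancel hs0.ne', ENNReal.rpow_one]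
      _ ≤ T n ^ (1/s) := ENNReal.rpow_le_rpow h1 (by positivity)
  -- eventually ψ q ≤ q
  have hev : ∃ N : ℕ, ∀ q, N ≤ q → 0 < q → ψ q ≤ q := by
    have hf_tend : Tendsto f atTop (nhds 0) := hsum.tendsto_atTop_zero
    have h1 : ∀ᶠ q in atTop, f q < 1 := hf_tend.eventually_lt_const zero_lt_one
    obtain ⟨N, hN⟩ := eventually_atTop.mp h1
    refine ⟨N, fun q hq hq0 => ?_⟩
    by_contra hcon
    push_neg at hcon
    have hq0' : (0:ℝ) < q := by exact_mod_cast hq0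
    have h2 : (1:ℝ) ≤ ψ q / q := by
      rw [le_div_iff₀ hq0']; linarith
    have h3 : (1:ℝ) ≤ (ψ q / q) ^ s := Real.one_le_rpow h2 hs0.le
    have h4 := htot1 hq0
    have h5 := hN q hq
    simp only [hfdef] at h5
    nlinarith
  obtain ⟨N, hN⟩ := hev
  -- the covering sets
  set C : ℕ → ℤ × ℕ → Prop := fun n pq =>
    n ≤ pq.2 ∧ 0 < pq.2 ∧ Int.gcd pq.1 (pq.2:ℤ) = 1 ∧ -(pq.2:ℤ) ≤ pq.1 ∧ pq.1 ≤ 2*(pq.2:ℤ)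
    with hCdef
  set t : ℕ → ℤ × ℕ → Set ℝ := fun n pq =>
    if C n pq then Metric.closedBall ((pq.1:ℝ)/pq.2) (ψ pq.2 / pq.2) else ∅ with htdef
  set r : ℕ → ℝ≥0∞ := fun n => 2 * T n ^ (1/s) with hrdef
  have hr : Tendsto r atTop (nhds 0) := by
    have h1 : Tendsto (fun n => T n ^ (1/s)) atTop (nhds ((0:ℝ≥0∞) ^ (1/s))) :=
      (ENNReal.continuous_rpow_const.tendsto 0).comp hTtend
    rw [ENNReal.zero_rpow_of_pos (by positivity)] at h1
    have h2 := ENNReal.Tendsto.const_mul (a := (2:ℝ≥0∞)) h1 (Or.inr (by simp))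
    simpa [hrdef, one_div] using h2
  have ht : ∀ᶠ n in atTop, ∀ pq : ℤ × ℕ, EMetric.diam (t n pq) ≤ r n := by
    refine Eventually.of_forall fun n pq => ?_
    by_cases hc : C n pq
    · simp only [htdef, if_pos hc]
      have hb : (0:ℝ) ≤ ψ pq.2 / pq.2 := hdiv0 pq.2
      rw [← Metric.emetric_closedBall hb]
      refine le_trans EMetric.diam_closedBall ?_
      exact mul_le_mul_right (hradial hc.1 hc.2.1) 2
    · simp only [htdef, if_neg hc]; simp [EMetric.diam]
  have hst : ∀ᶠ n in atTop, W' ψ ⊆ ⋃ pq : ℤ × ℕ, t n pq := by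
    filter_upwards [eventually_ge_atTop N] with n hn
    intro x hx
    obtain ⟨⟨hx0, hx1⟩, hinf⟩ := hx
    set A := {pq : ℤ × ℕ | 0 < pq.2 ∧ Int.gcd pq.1 (pq.2 : ℤ) = 1 ∧
      |(pq.2 : ℝ) * x - (pq.1 : ℝ)| < ψ pq.2} with hAdef
    set B := {pq : ℤ × ℕ | pq.2 < n} with hBdef
    have hfin : (A ∩ B).Finite := by
      set M : ℝ := ∑ j ∈ Finset.range n, (ψ j + j) with hM
      have hMb : ∀ q : ℕ, q < n → ψ q + q ≤ M := by
        intro q hq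
        exact Finset.single_le_sum (f := fun j => ψ j + (j:ℝ))
          (fun j _ => by have := hψ j; positivity) (Finset.mem_range.mpr hq)
      have hsub : (A ∩ B) ⊆ (Set.Icc (-(⌈M⌉)) ⌈M⌉) ×ˢ (Set.Iio n) := by
        rintro ⟨p, q⟩ ⟨⟨hq, _, habs⟩, hqn⟩
        simp only [Set.mem_prod, Set.mem_Icc, Set.mem_Iio]
        simp only [hBdef, Set.mem_setOf_eq] at hqn
        refine ⟨?_, hqn⟩
        have h3 : |(q:ℝ)*x| ≤ q := by
          rw [abs_of_nonneg (by positivity)]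
          nlinarith [hx1.le, Nat.cast_nonneg (α := ℝ) q]
        have h1 : |(p:ℝ)| ≤ |(q:ℝ) * x - p| + |(q:ℝ)*x| := by
          calc |(p:ℝ)| = |(q:ℝ)*x - ((q:ℝ)*x - p)| := by rw [sub_sub_cancel]
            _ ≤ |(q:ℝ)*x| + |(q:ℝ)*x - p| := abs_sub _ _
            _ = |(q:ℝ)*x - p| + |(q:ℝ)*x| := add_comm _ _
        have h4 : |(p:ℝ)| < ψ q + q := by
          simp only [hAdef, Set.mem_setOf_eq] at habs
          calc |(p:ℝ)| ≤ |(q:ℝ) * x - p| + |(q:ℝ)*x| := h1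
            _ < ψ q + q := by exact add_lt_add_of_lt_of_le habs h3
        have h5 : |(p:ℝ)| ≤ M := le_trans h4.le (hMb q hqn)
        have h6 : ((|p| : ℤ) : ℝ) ≤ ((⌈M⌉ : ℤ) : ℝ) := by
          push_cast
          exact le_trans (by exact_mod_cast h5) (Int.le_ceil M)
        have h7 : |p| ≤ ⌈M⌉ := by exact_mod_cast h6
        exact abs_le.mp h7
      exact Set.Finite.subset ((Set.finite_Icc _ _).prod (Set.finite_Iio n)) hsub
    have hinf2 : (A \ (A ∩ B)).Infinite := hinf.diff hfin
    rw [Set.diff_self_inter] at hinf2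
    obtain ⟨⟨p, q⟩, hpqA, hpqB⟩ := hinf2.nonempty
    simp only [hAdef, Set.mem_setOf_eq] at hpqA
    simp only [hBdef, Set.mem_setOf_eq, not_lt] at hpqB
    obtain ⟨hq, hg, habs⟩ := hpqA
    have hNq : N ≤ q := le_trans hn hpqB
    have hψq : ψ q ≤ q := hN q hNq hq
    have hq0' : (0:ℝ) < q := by exact_mod_cast hq
    have habs' := abs_lt.mp habs
    have hqx0 : (0:ℝ) ≤ (q:ℝ) * x := by positivity
    have hqx1 : (q:ℝ) * x < q := by nlinarith
    have hpl : -(q:ℤ) ≤ p := by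
      have : (-(q:ℝ)) < p := by linarith [habs'.2]
      exact_mod_cast this.le
    have hpu : p ≤ 2*(q:ℤ) := by
      have : (p:ℝ) < 2*q := by linarith [habs'.1]
      have h2 : p < 2*(q:ℤ) := by exact_mod_cast this
      exact h2.le
    refine Set.mem_iUnion.mpr ⟨(p, q), ?_⟩
    simp only [htdef]
    rw [if_pos (show C n (p, q) from ⟨hpqB, hq, hg, hpl, hpu⟩)]
    rw [Metric.mem_closedBall, Real.dist_eq]
    have hxe : x - (p:ℝ)/q = ((q:ℝ)*x - p)/q := by field_simp
    rw [hxe, abs_div, abs_of_pos hq0']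
    gcongr
  -- the sum bound
  set c2 : ℝ≥0∞ := (2:ℝ≥0∞) ^ s * 4 with hc2
  have hc2top : c2 ≠ ⊤ :=
    ENNReal.mul_ne_top (ENNReal.rpow_ne_top_of_nonneg hs0.le (by simp)) (by simp)
  have hbound : ∀ n, (∑' pq : ℤ × ℕ, EMetric.diam (t n pq) ^ s) ≤ c2 * T n := by
    intro n
    have hinner : ∀ q : ℕ, (∑' p : ℤ, EMetric.diam (t n (p, q)) ^ s) ≤
        (if n ≤ q then c2 * g q else 0) := by
      intro q
      by_cases hq : n ≤ q ∧ 0 < q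
      · rw [if_pos hq.1]
        set c : ℝ≥0∞ := (2:ℝ≥0∞)^s * ENNReal.ofReal ((ψ q / q) ^ s) with hc
        set Sq := (Finset.Icc (-(q:ℤ)) (2*q)).filter (fun p => Int.gcd p (q:ℤ) = 1) with hSq
        have hzero : ∀ p ∉ Sq, EMetric.diam (t n (p, q)) ^ s = 0 := by
          intro p hp
          simp only [htdef]
          have hnc : ¬ C n (p, q) := by
            intro hCc
            apply hp
            simp only [hSq, Finset.mem_filter, Finset.mem_Icc]
            exact ⟨⟨hCc.2.2.2.1, hCc.2.2.2.2⟩, hCc.2.2.1⟩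
          simp [EMetric.diam, if_neg hnc, EMetric.diam_empty, ENNReal.zero_rpow_of_pos hs0]
        have hterm : ∀ p ∈ Sq, EMetric.diam (t n (p, q)) ^ s ≤ c := by
          intro p _
          by_cases hCc : C n (p, q)
          · simp only [htdef, if_pos hCc]
            have hb : (0:ℝ) ≤ ψ q / q := hdiv0 q
            have hd : EMetric.diam (Metric.closedBall ((p:ℝ)/q) (ψ q / q)) ≤
                2 * ENNReal.ofReal (ψ q / q) := by
              rw [← Metric.emetric_closedBall hb]
              exact EMetric.diam_closedBall
            calc EMetric.diam (Metric.closedBall ((p:ℝ)/q) (ψ q / q)) ^ s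
                ≤ (2 * ENNReal.ofReal (ψ q / q)) ^ s := ENNReal.rpow_le_rpow hd hs0.le
              _ = (2:ℝ≥0∞)^s * (ENNReal.ofReal (ψ q / q))^s :=
                  ENNReal.mul_rpow_of_nonneg _ _ hs0.le
              _ = c := by rw [hc, ENNReal.ofReal_rpow_of_nonneg hb hs0.le]
          · simp only [htdef, if_neg hCc]
            simp [EMetric.diam, ENNReal.zero_rpow_of_pos hs0]
        calc (∑' p : ℤ, EMetric.diam (t n (p, q)) ^ s)
            = ∑ p ∈ Sq, EMetric.diam (t n (p, q)) ^ s := tsum_eq_sum hzero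
          _ ≤ Sq.card • c := Finset.sum_le_card_nsmul _ _ _ hterm
          _ ≤ (4 * q.totient) • c := by
              have h := coprime_count_le q hq.2
              calc Sq.card • c = (Sq.card : ℝ≥0∞) * c := nsmul_eq_mul _ _
                _ ≤ ((4 * q.totient : ℕ) : ℝ≥0∞) * c :=
                    mul_le_mul_left (by exact_mod_cast h) c
                _ = (4 * q.totient) • c := (nsmul_eq_mul _ _).symm
          _ = ((4 * q.totient : ℕ) : ℝ≥0∞) * c := nsmul_eq_mul _ _
          _ = c2 * g q := by
              simp only [hc, hc2, hgdef, hfdef]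
              rw [ENNReal.ofReal_mul (Nat.cast_nonneg q.totient), ENNReal.ofReal_natCast]
              push_cast
              ring
      · have hz : ∀ p : ℤ, EMetric.diam (t n (p, q)) ^ s = 0 := by
          intro p; simp only [htdef]
          have hnc : ¬ C n (p,q) := fun hCc => hq ⟨hCc.1, hCc.2.1⟩
          simp [EMetric.diam, if_neg hnc, ENNReal.zero_rpow_of_pos hs0]
        simp only [hz, tsum_zero]
        exact zero_le
    calc (∑' pq : ℤ × ℕ, EMetric.diam (t n pq) ^ s)
        = ∑' p : ℤ, ∑' q : ℕ, EMetric.diam (t n (p, q)) ^ s := by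
          rw [← ENNReal.tsum_prod]
      _ = ∑' q : ℕ, ∑' p : ℤ, EMetric.diam (t n (p, q)) ^ s := ENNReal.tsum_comm
      _ ≤ ∑' q : ℕ, (if n ≤ q then c2 * g q else 0) := ENNReal.tsum_le_tsum hinner
      _ = ∑' k : ℕ, (if n ≤ k + n then c2 * g (k + n) else 0) := by
          refine tsum_eq_tsum_of_ne_zero_bij (fun x => x.1 + n) ?_ ?_ ?_
          · exact fun a b hab => Subtype.ext (Nat.add_right_cancel hab)
          · intro q hq
            have hnq : n ≤ q := by
              by_contra hcon
              simp [Function.mem_support, if_neg hcon] at hq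
            have hqn' : q - n + n = q := Nat.sub_add_cancel hnq
            refine ⟨⟨q - n, ?_⟩, ?_⟩
            · refine Function.mem_support.mpr ?_
              simp only [hqn']
              exact Function.mem_support.mp hq
            · simpa using hqn'
          · intro x; rfl
      _ = ∑' k : ℕ, c2 * g (k + n) := by
          refine tsum_congr fun k => ?_
          rw [if_pos (Nat.le_add_left n k)]
      _ = c2 * T n := ENNReal.tsum_mul_left
  have key := Measure.hausdorffMeasure_le_liminf_tsum s (W' ψ) r hr t ht hst
  refine le_antisymm (key.trans ?_) zero_le
  have hb : Tendsto (fun n => c2 * T n) atTop (nhds 0) := by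
    have h2 := ENNReal.Tendsto.const_mul (a := c2) hTtend (Or.inr hc2top)
    simpa using h2
  calc liminf (fun n => ∑' pq : ℤ × ℕ, EMetric.diam (t n pq) ^ s) atTop
      ≤ liminf (fun n => c2 * T n) atTop := liminf_le_liminf (Eventually.of_forall hbound)
    _ = 0 := hb.liminf_eq
end

section
/- Let n, m ≥ 1 with nm > 1, ψ : ℕ → [0,∞), and s ∈ (m(n−1), nm]. If ∑_{q=1}^∞ q^{m+n−1}·(ψ(q)/q)^{s−m(n−1)} converges, then the s-dimensional Hausdorff measure of W_{n,m}(ψ) = {X ∈ [0,1)^{n×m} : ‖qX‖ < ψ(|q|) for infinitely many q ∈ ℤⁿ \ {0}} is zero. -/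
open MeasureTheory Measure Filter Finset ENNReal EMetric Topology

lemma hcantelli {X : Type*} [EMetricSpace X] [MeasurableSpace X] [BorelSpace X]
    (d : ℝ) (S : Set X) (E : ℕ → Set X) {ι : ℕ → Type*} [∀ Q, Countable (ι Q)]
    (t : ∀ Q, ι Q → Set X) (δ : ℕ → ℝ≥0∞)
    (hcov : ∀ Q, E Q ⊆ ⋃ i, t Q i)
    (hdiam : ∀ Q i, diam (t Q i) ≤ δ Q)
    (hδ : Tendsto δ atTop (𝓝 0))
    (htail : Tendsto (fun N => ∑' (k : ℕ) (i : ι (N + k)), diam (t (N + k) i) ^ d)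
      atTop (𝓝 0))
    (hS : ∀ N, S ⊆ ⋃ (Q : ℕ) (_ : N ≤ Q), E Q) :
    μH[d] S = 0 := by
  classical
  refine le_antisymm ?_ zero_le
  set r : ℕ → ℝ≥0∞ := fun N => ⨆ (Q : ℕ) (_ : N ≤ Q), δ Q with hr_def
  set t' : ∀ N : ℕ, ((k : ℕ) × ι (N + k)) → Set X := fun N p => t (N + p.1) p.2 with ht'_def
  have hr : Tendsto r atTop (𝓝 0) := by
    rw [ENNReal.tendsto_atTop_zero]
    intro ε hε
    rcases ENNReal.tendsto_atTop_zero.1 hδ ε hε with ⟨N₀, hN₀⟩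
    exact ⟨N₀, fun N hN => iSup₂_le fun Q hQ => hN₀ Q (hN.trans hQ)⟩
  have ht : ∀ᶠ N in atTop, ∀ p, diam (t' N p) ≤ r N := by
    filter_upwards with N p
    exact (hdiam _ _).trans (le_iSup₂ (f := fun (Q : ℕ) (_ : N ≤ Q) => δ Q) (N + p.1)
      (Nat.le_add_right _ _))
  have hst : ∀ᶠ N in atTop, S ⊆ ⋃ p, t' N p := by
    filter_upwards with N
    intro x hx
    rcases Set.mem_iUnion₂.1 (hS N hx) with ⟨Q, hQ, hxQ⟩
    obtain ⟨k, rfl⟩ : ∃ k, Q = N + k := ⟨Q - N, (Nat.add_sub_cancel' hQ).symm⟩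
    rcases Set.mem_iUnion.1 (hcov _ hxQ) with ⟨i, hi⟩
    exact Set.mem_iUnion.2 ⟨⟨k, i⟩, hi⟩
  have key := Measure.hausdorffMeasure_le_liminf_tsum
    (ι := fun N => (k : ℕ) × ι (N + k)) d S (l := atTop) r hr t' ht hst
  refine key.trans ?_
  have heq : (fun N => ∑' (p : (k : ℕ) × ι (N + k)), diam (t' N p) ^ d)
      = fun N => ∑' (k : ℕ) (i : ι (N + k)), diam (t (N + k) i) ^ d := by
    funext N; exact ENNReal.tsum_sigma (f := fun k i => diam (t (N + k) i) ^ d)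
  rw [show (fun N => ∑' (p : (k : ℕ) × ι (N + k)), Metric.ediam (t' N p) ^ d) = _ from heq,
    htail.liminf_eq]


def cube {n m : ℕ} (a : Fin n → Fin m → ℝ) (ρ : ℝ) : Set (Fin n → Fin m → ℝ) :=
  {X | ∀ i j, X i j ∈ Set.Icc (a i j) (a i j + ρ)}

lemma diam_cube {n m : ℕ} (a : Fin n → Fin m → ℝ) (ρ : ℝ) :
    diam (cube a ρ) ≤ ENNReal.ofReal ρ := by
  refine EMetric.diam_le fun X hX Y hY => ?_
  rw [edist_pi_def]
  refine Finset.sup_le fun i _ => ?_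
  rw [edist_pi_def]
  refine Finset.sup_le fun j _ => ?_
  rw [edist_dist, Real.dist_eq]
  refine ENNReal.ofReal_le_ofReal ?_
  have h1 := hX i j; have h2 := hY i j
  rw [Set.mem_Icc] at h1 h2
  rw [abs_sub_le_iff]
  constructor <;> linarith [h1.1, h1.2, h2.1, h2.2]

noncomputable def cellCorner {n m : ℕ} (ρ : ℝ) (q : Fin n → ℤ) (i0 : Fin n)
    (D : Fin m → ℤ × (Fin n → ℤ)) (i : Fin n) (j : Fin m) : ℝ :=
  if i = i0 then
    (((D j).1 : ℝ) - ∑ i' ∈ Finset.univ.erase i0, (q i' : ℝ) * ((D j).2 i' : ℝ) * ρ) / (q i0 : ℝ)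
      + ((D j).2 i0 : ℝ) * ρ
  else ((D j).2 i : ℝ) * ρ

noncomputable def Ffin (n m Q : ℕ) (ρ : ℝ) (i0 : Fin n) : Finset (Fin m → ℤ × (Fin n → ℤ)) :=
  Fintype.piFinset fun _ => (Finset.Icc (-(n * Q + 1) : ℤ) (n * Q + 1)) ×ˢ
    Fintype.piFinset (fun i => if i = i0 then Finset.Icc (-(n : ℤ)) n
      else Finset.Icc 0 ⌈1 / ρ⌉)

lemma floor_mul_le {z ρ : ℝ} (hρ : 0 < ρ) : (⌊z / ρ⌋ : ℝ) * ρ ≤ z := by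
  have h := Int.floor_le (z / ρ)
  calc (⌊z / ρ⌋ : ℝ) * ρ ≤ (z / ρ) * ρ := by nlinarith
  _ = z := div_mul_cancel₀ _ hρ.ne'

lemma lt_floor_mul_add {z ρ : ℝ} (hρ : 0 < ρ) : z < (⌊z / ρ⌋ : ℝ) * ρ + ρ := by
  have h := Int.lt_floor_add_one (z / ρ)
  have := mul_lt_mul_of_pos_right h hρ
  rw [add_mul, one_mul] at this
  calc z = (z / ρ) * ρ := (div_mul_cancel₀ _ hρ.ne').symm
  _ < _ := this

lemma cell_cover {n m Q : ℕ} (q : Fin n → ℤ) (i0 : Fin n)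
    (hqi0 : (q i0).natAbs = Q) (hqle : ∀ i, (q i).natAbs ≤ Q) (hQ1 : 1 ≤ Q)
    {ψQ : ℝ} (hψ : 0 < ψQ)
    (X : Fin n → Fin m → ℝ) (hX : ∀ i j, X i j ∈ Set.Ico (0 : ℝ) 1)
    (hXq : ∀ j, distNearestInt (∑ i, (q i : ℝ) * X i j) < ψQ) :
    ∃ D ∈ Ffin n m Q (ψQ / Q) i0, X ∈ cube (cellCorner (ψQ / Q) q i0 D) (ψQ / Q) := by
  classical
  have hQpos : (0 : ℝ) < Q := by exact_mod_cast hQ1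
  set ρ : ℝ := ψQ / Q with hρdef
  have hρ : 0 < ρ := div_pos hψ hQpos
  have hψQρ : ψQ = Q * ρ := by rw [hρdef]; field_simp
  have hq0r : |(q i0 : ℝ)| = Q := by
    rw [← Int.cast_abs, Int.abs_eq_natAbs, hqi0]; simp
  have hq0ne : (q i0 : ℝ) ≠ 0 := by
    intro h; rw [h, abs_zero] at hq0r; exact hQpos.ne hq0r
  have hqr : ∀ i, |(q i : ℝ)| ≤ Q := by
    intro i
    rw [← Int.cast_abs, Int.abs_eq_natAbs]
    exact_mod_cast hqle i
  set y : Fin m → ℝ := fun j => ∑ i, (q i : ℝ) * X i j with hy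
  set p : Fin m → ℤ := fun j => round (y j) with hp
  set c : Fin m → ℝ := fun j =>
    ((p j : ℝ) - ∑ i' ∈ Finset.univ.erase i0, (q i' : ℝ) * (⌊X i' j / ρ⌋ : ℝ) * ρ) / (q i0 : ℝ)
    with hc
  set g : Fin m → Fin n → ℤ := fun j i =>
    if i = i0 then ⌊(X i0 j - c j) / ρ⌋ else ⌊X i j / ρ⌋ with hg
  -- key estimate
  have hckey : ∀ j, |X i0 j - c j| < n * ρ := by
    intro j
    have hyp : |y j - (p j : ℝ)| < ψQ := hXq j
    have hsplit : y j = (q i0 : ℝ) * X i0 j +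
        ∑ i' ∈ Finset.univ.erase i0, (q i' : ℝ) * X i' j := by
      rw [hy]
      exact (Finset.add_sum_erase _ _ (Finset.mem_univ i0)).symm
    set S : ℝ := ∑ i' ∈ Finset.univ.erase i0, (q i' : ℝ) * (X i' j - (⌊X i' j / ρ⌋ : ℝ) * ρ)
      with hS
    have hqc : (q i0 : ℝ) * (X i0 j - c j) = (y j - (p j : ℝ)) - S := by
      rw [hS, hc, mul_sub, mul_div_cancel₀ _ hq0ne, hsplit]
      have hrw : ∀ i' ∈ Finset.univ.erase i0, (q i' : ℝ) * (X i' j - (⌊X i' j / ρ⌋ : ℝ) * ρ)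
          = (q i' : ℝ) * X i' j - (q i' : ℝ) * (⌊X i' j / ρ⌋ : ℝ) * ρ := fun i' _ => by ring
      rw [Finset.sum_congr rfl hrw, Finset.sum_sub_distrib]
      ring
    have hn1 : (1 : ℝ) ≤ n := by
      have : 0 < n := Fin.pos i0; exact_mod_cast this
    have hsumb : |S| ≤ ((n : ℝ) - 1) * (Q * ρ) := by
      rw [hS]
      calc _ ≤ ∑ i' ∈ Finset.univ.erase i0,
          |(q i' : ℝ) * (X i' j - (⌊X i' j / ρ⌋ : ℝ) * ρ)| := Finset.abs_sum_le_sum_abs _ _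
      _ ≤ ∑ _i' ∈ Finset.univ.erase i0, (Q : ℝ) * ρ := by
          refine Finset.sum_le_sum fun i' _ => ?_
          rw [abs_mul]
          refine mul_le_mul (hqr i') ?_ (abs_nonneg _) hQpos.le
          rw [abs_le]
          constructor
          · linarith [floor_mul_le (z := X i' j) hρ]
          · linarith [lt_floor_mul_add (z := X i' j) hρ]
      _ = ((n : ℝ) - 1) * (Q * ρ) := by
          rw [Finset.sum_const, Finset.card_erase_of_mem (Finset.mem_univ i0)]
          have hn : 1 ≤ n := by have := Fin.pos i0; omega
          rw [nsmul_eq_mul, Finset.card_univ, Fintype.card_fin, Nat.cast_sub hn]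
          push_cast; ring
    have habs : |(q i0 : ℝ)| * |X i0 j - c j| < (n : ℝ) * ((Q : ℝ) * ρ) := by
      rw [← abs_mul, hqc]
      have h2 : |y j - (p j : ℝ) - S| ≤ |y j - (p j : ℝ)| + |S| := abs_sub _ _
      have hQρ : ψQ = (Q : ℝ) * ρ := hψQρ
      linarith [hyp, hsumb]
    rw [hq0r] at habs
    have : (Q : ℝ) * |X i0 j - c j| < (Q : ℝ) * ((n : ℝ) * ρ) := by linarith [habs]
    exact (mul_lt_mul_iff_right₀ hQpos).1 this
  refine ⟨fun j => (p j, g j), ?_, ?_⟩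
  · -- membership in the finset
    rw [Ffin, Fintype.mem_piFinset]
    intro j
    rw [Finset.mem_product]
    constructor
    · rw [Finset.mem_Icc]
      have hyb : |y j| ≤ (n : ℝ) * Q := by
        rw [hy]
        calc |∑ i, (q i : ℝ) * X i j| ≤ ∑ i, |(q i : ℝ) * X i j| :=
            Finset.abs_sum_le_sum_abs _ _
        _ ≤ ∑ _i : Fin n, (Q : ℝ) * 1 := by
            refine Finset.sum_le_sum fun i _ => ?_
            rw [abs_mul]
            refine mul_le_mul (hqr i) ?_ (abs_nonneg _) hQpos.le
            have h := hX i j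
            rw [Set.mem_Ico] at h
            rw [abs_le]
            constructor <;> linarith [h.1, h.2]
        _ = (n : ℝ) * Q := by
            rw [Finset.sum_const, Finset.card_univ, Fintype.card_fin, nsmul_eq_mul]
            ring
      have hpr : |(p j : ℝ)| ≤ (n : ℝ) * Q + 1 := by
        have h1 : |y j - (p j : ℝ)| ≤ 1 / 2 := abs_sub_round (y j)
        have h2 : |(p j : ℝ)| ≤ |y j| + |y j - (p j : ℝ)| := by
          have := abs_sub_abs_le_abs_sub (y j) (y j - (p j : ℝ))
          have h3 : y j - (y j - (p j : ℝ)) = (p j : ℝ) := by ring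
          calc |(p j : ℝ)| = |y j - (y j - (p j : ℝ))| := by rw [h3]
          _ ≤ |y j| + |y j - (p j : ℝ)| := abs_sub _ _
        linarith
      have hint : |p j| ≤ ((n : ℤ) * Q + 1) := by
        have h4 : ((|p j| : ℤ) : ℝ) ≤ (((n : ℤ) * Q + 1 : ℤ) : ℝ) := by
          rw [Int.cast_abs]; push_cast; linarith
        exact_mod_cast h4
      exact abs_le.1 hint
    · rw [Fintype.mem_piFinset]
      intro i
      by_cases hi : i = i0
      · subst hi
        rw [if_pos rfl, Finset.mem_Icc]
        have hlt := abs_lt.1 (hckey j)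
        have hgi : g j i = ⌊(X i j - c j) / ρ⌋ := by rw [hg]; simp
        rw [show (p j, g j).2 i = g j i from rfl, hgi]
        constructor
        · rw [Int.le_floor]
          push_cast
          rw [le_div_iff₀ hρ]
          nlinarith [hlt.1]
        · have hd : (X i j - c j) / ρ ≤ (n : ℝ) := by
            rw [div_le_iff₀ hρ]
            nlinarith [hlt.2]
          calc ⌊(X i j - c j) / ρ⌋ ≤ ⌊(n : ℝ)⌋ := Int.floor_le_floor hd
          _ = n := by simp
      · rw [if_neg hi, Finset.mem_Icc]
        have hgi : g j i = ⌊X i j / ρ⌋ := by rw [hg]; simp [hi]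
        rw [show (p j, g j).2 i = g j i from rfl, hgi]
        have h := hX i j
        rw [Set.mem_Ico] at h
        constructor
        · exact Int.floor_nonneg.2 (div_nonneg h.1 hρ.le)
        · calc ⌊X i j / ρ⌋ ≤ ⌊1 / ρ⌋ := Int.floor_le_floor ((div_le_div_iff_of_pos_right hρ).2 h.2.le)
          _ ≤ ⌈1 / ρ⌉ := Int.floor_le_ceil _
  · -- X lies in the cell
    intro i j
    by_cases hi : i = i0
    · subst hi
      have hcorner : cellCorner ρ q i (fun j => (p j, g j)) i j
          = c j + (⌊(X i j - c j) / ρ⌋ : ℝ) * ρ := by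
        rw [cellCorner, if_pos rfl, hc]
        have hsame : ∑ i' ∈ Finset.univ.erase i, (q i' : ℝ) * ((g j i' : ℤ) : ℝ) * ρ
            = ∑ i' ∈ Finset.univ.erase i, (q i' : ℝ) * (⌊X i' j / ρ⌋ : ℝ) * ρ := by
          refine Finset.sum_congr rfl fun i' hi' => ?_
          have : i' ≠ i := (Finset.mem_erase.1 hi').1
          rw [hg]; simp [this]
        have hgi0 : g j i = ⌊(X i j - c j) / ρ⌋ := by rw [hg]; simp
        rw [show Prod.fst (p j, g j) = p j from rfl, show Prod.snd (p j, g j) = g j from rfl,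
          hsame, hgi0]
      rw [Set.mem_Icc, hcorner]
      constructor
      · linarith [floor_mul_le (z := X i j - c j) hρ]
      · linarith [lt_floor_mul_add (z := X i j - c j) hρ]
    · have hcorner : cellCorner ρ q i0 (fun j => (p j, g j)) i j = (⌊X i j / ρ⌋ : ℝ) * ρ := by
        rw [cellCorner, if_neg hi]
        have hgi : g j i = ⌊X i j / ρ⌋ := by rw [hg]; simp [hi]
        rw [show Prod.snd (p j, g j) = g j from rfl, hgi]
      rw [Set.mem_Icc, hcorner]
      constructor
      · exact floor_mul_le hρ
      · linarith [lt_floor_mul_add (z := X i j) hρ]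

abbrev Jt (n m : ℕ) : Type := (Fin n → ℤ) × Fin n × (Fin m → ℤ × (Fin n → ℤ))

noncomputable def Zfin (n Q : ℕ) (i0 : Fin n) : Finset (Fin n → ℤ) :=
  Fintype.piFinset fun i => if i = i0 then {(Q : ℤ), -(Q : ℤ)} else Finset.Icc (-(Q : ℤ)) Q

def tcovCond (n m : ℕ) (ψ : ℕ → ℝ) (Q : ℕ) (z : Jt n m) : Prop :=
  (z.1 z.2.1).natAbs = Q ∧ (∀ i, (z.1 i).natAbs ≤ Q) ∧ 1 ≤ Q ∧ 0 < ψ Q ∧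
    ψ Q / Q ≤ 1 ∧ z.2.2 ∈ Ffin n m Q (ψ Q / Q) z.2.1

open Classical in
noncomputable def tcov (n m : ℕ) (ψ : ℕ → ℝ) (Q : ℕ) : Option (Jt n m) → Set (Fin n → Fin m → ℝ)
  | none => if 1 < ψ Q / Q then cube (fun _ _ => (0 : ℝ)) 1 else ∅
  | some z => if tcovCond n m ψ Q z then
      cube (cellCorner (ψ Q / Q) z.1 z.2.1 z.2.2) (ψ Q / Q) else ∅

lemma tcov_diam (n m : ℕ) (ψ : ℕ → ℝ) (Q : ℕ) (z : Option (Jt n m)) :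
    diam (tcov n m ψ Q z) ≤ ENNReal.ofReal (min (ψ Q / Q) 1) := by
  match z with
  | none =>
    rw [tcov]
    split_ifs with h
    · refine (diam_cube _ _).trans (ENNReal.ofReal_le_ofReal ?_)
      exact le_min h.le le_rfl
    · simp [EMetric.diam]
  | some z =>
    rw [tcov]
    split_ifs with h
    · exact (diam_cube _ _).trans (ENNReal.ofReal_le_ofReal (le_min le_rfl h.2.2.2.2.1))
    · simp [EMetric.diam]

lemma tcov_cover (n m : ℕ) (hn : 1 ≤ n) (hm : 1 ≤ m) (ψ : ℕ → ℝ) (Q : ℕ)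
    (X : Fin n → Fin m → ℝ) (hX : ∀ i j, X i j ∈ Set.Ico (0 : ℝ) 1)
    (q : Fin n → ℤ) (hq0 : q ≠ 0) (hsup : (Finset.univ.sup fun i => (q i).natAbs) = Q)
    (hdq : ∀ j, distNearestInt (∑ i, (q i : ℝ) * X i j) < ψ Q) :
    ∃ z, X ∈ tcov n m ψ Q z := by
  haveI : Nonempty (Fin n) := ⟨⟨0, hn⟩⟩
  haveI : Nonempty (Fin m) := ⟨⟨0, hm⟩⟩
  by_cases h1 : 1 < ψ Q / Q
  · refine ⟨none, ?_⟩
    rw [tcov, if_pos h1]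
    intro i j
    have h := hX i j
    rw [Set.mem_Ico] at h
    exact ⟨h.1, by simpa using h.2.le⟩
  · push_neg at h1
    have hψpos : 0 < ψ Q := by
      have h := hdq (Classical.arbitrary _)
      have h2 : 0 ≤ distNearestInt (∑ i, (q i : ℝ) * X i (Classical.arbitrary _)) := abs_nonneg _
      linarith
    obtain ⟨i0, -, hi0⟩ := Finset.exists_mem_eq_sup Finset.univ Finset.univ_nonempty
      (fun i => (q i).natAbs)
    have hqi0 : (q i0).natAbs = Q := hi0.symm.trans hsup
    have hqle : ∀ i, (q i).natAbs ≤ Q := fun i => hsup ▸ Finset.le_sup (f := fun i => (q i).natAbs) (Finset.mem_univ i)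
    have hQ1 : 1 ≤ Q := by
      obtain ⟨i, hi⟩ := Function.ne_iff.1 hq0
      exact le_trans (Int.natAbs_pos.2 hi) (hqle i)
    obtain ⟨D, hD, hXD⟩ := cell_cover q i0 hqi0 hqle hQ1 hψpos X hX hdq
    have hcond : tcovCond n m ψ Q (q, i0, D) := ⟨hqi0, hqle, hQ1, hψpos, h1, hD⟩
    exact ⟨some (q, i0, D), by rw [tcov, if_pos hcond]; exact hXD⟩

lemma card_Icc_real (a b : ℤ) (h : a ≤ b + 1) : ((Finset.Icc a b).card : ℝ) = (b : ℝ) + 1 - a := by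
  have h2 := Int.card_Icc_of_le (a := a) (b := b) h
  exact_mod_cast congrArg (Int.cast : ℤ → ℝ) h2

lemma card_Zfin_le (n Q : ℕ) (i0 : Fin n) :
    ((Zfin n Q i0).card : ℝ) ≤ 2 * (2 * (Q : ℝ) + 1) ^ (n - 1) := by
  classical
  have h1 : (Zfin n Q i0).card
      = ({(Q : ℤ), -(Q : ℤ)} : Finset ℤ).card
        * (Finset.Icc (-(Q : ℤ)) (Q : ℤ)).card ^ (n - 1) := by
    rw [Zfin, Fintype.card_piFinset,
      ← Finset.mul_prod_erase Finset.univ _ (Finset.mem_univ i0), if_pos rfl]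
    congr 1
    rw [Finset.prod_congr rfl (fun i hi => by rw [if_neg (Finset.mem_erase.1 hi).1]),
      Finset.prod_const, Finset.card_erase_of_mem (Finset.mem_univ i0),
      Finset.card_univ, Fintype.card_fin]
  have h2 : (({(Q : ℤ), -(Q : ℤ)} : Finset ℤ).card : ℝ) ≤ 2 := by
    have := Finset.card_insert_le (Q : ℤ) ({-(Q : ℤ)} : Finset ℤ)
    have h3 : (({(Q : ℤ), -(Q : ℤ)} : Finset ℤ).card : ℕ) ≤ 2 := by
      simpa using this
    exact_mod_cast h3
  have h3 : ((Finset.Icc (-(Q : ℤ)) (Q : ℤ)).card : ℝ) = 2 * (Q : ℝ) + 1 := by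
    rw [card_Icc_real _ _ (by omega)]
    push_cast; ring
  calc ((Zfin n Q i0).card : ℝ)
      = (({(Q : ℤ), -(Q : ℤ)} : Finset ℤ).card : ℝ)
        * ((Finset.Icc (-(Q : ℤ)) (Q : ℤ)).card : ℝ) ^ (n - 1) := by rw [h1]; push_cast; ring
  _ ≤ 2 * (2 * (Q : ℝ) + 1) ^ (n - 1) := by
      rw [h3]
      gcongr

lemma card_Ffin_eq (n m Q : ℕ) {ρ : ℝ} (hρ : 0 < ρ) (i0 : Fin n) :
    ((Ffin n m Q ρ i0).card : ℝ)
      = ((2 * (n : ℝ) * Q + 3) * ((2 * (n : ℝ) + 1) * ((⌈1/ρ⌉ : ℝ) + 1) ^ (n - 1))) ^ m := by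
  classical
  have hceil : (0 : ℤ) ≤ ⌈1/ρ⌉ := Int.ceil_nonneg (by positivity)
  have hprod : ((Finset.Icc (-(n * Q + 1) : ℤ) (n * Q + 1)) ×ˢ
      Fintype.piFinset (fun i => if i = i0 then Finset.Icc (-(n : ℤ)) n
        else Finset.Icc 0 ⌈1/ρ⌉)).card
      = (Finset.Icc (-(n * Q + 1) : ℤ) (n * Q + 1)).card
        * ((Finset.Icc (-(n : ℤ)) n).card * (Finset.Icc (0 : ℤ) ⌈1/ρ⌉).card ^ (n - 1)) := by
    rw [Finset.card_product, Fintype.card_piFinset,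
      ← Finset.mul_prod_erase Finset.univ _ (Finset.mem_univ i0), if_pos rfl]
    congr 2
    rw [Finset.prod_congr rfl (fun i hi => by rw [if_neg (Finset.mem_erase.1 hi).1]),
      Finset.prod_const, Finset.card_erase_of_mem (Finset.mem_univ i0),
      Finset.card_univ, Fintype.card_fin]
  have e1 : ((Finset.Icc (-(n * Q + 1) : ℤ) (n * Q + 1)).card : ℝ) = 2 * (n : ℝ) * Q + 3 := by
    rw [card_Icc_real _ _ (by
      have h0 : (0:ℤ) ≤ (n:ℤ) * (Q:ℤ) := by positivity
      linarith)]
    push_cast; ring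
  have e2 : ((Finset.Icc (-(n : ℤ)) (n : ℤ)).card : ℝ) = 2 * (n : ℝ) + 1 := by
    rw [card_Icc_real _ _ (by omega)]
    push_cast; ring
  have e3 : ((Finset.Icc (0 : ℤ) ⌈1/ρ⌉).card : ℝ) = (⌈1/ρ⌉ : ℝ) + 1 := by
    rw [card_Icc_real _ _ (by linarith [hceil])]
    push_cast; ring
  rw [Ffin, Fintype.card_piFinset, Finset.prod_const, Finset.card_univ, Fintype.card_fin]
  push_cast [hprod]
  rw [e1, e2, e3]

noncomputable def Kconst (n m : ℕ) : ℝ :=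
  (n : ℝ) * 2 * 3 ^ (n - 1) * ((2 * (n : ℝ) + 3) * (2 * (n : ℝ) + 1) * 3 ^ (n - 1)) ^ m

lemma Kconst_nonneg (n m : ℕ) : 0 ≤ Kconst n m := by
  unfold Kconst; positivity

lemma tcov_cost (n m : ℕ) (hn : 1 ≤ n) (ψ : ℕ → ℝ) {s : ℝ} (hs : 0 < s)
    (Q : ℕ) (hQ1 : 1 ≤ Q) (hψpos : 0 < ψ Q) (hρ1 : ψ Q / Q ≤ 1) :
    ∑' z : Option (Jt n m), diam (tcov n m ψ Q z) ^ s ≤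
      ENNReal.ofReal (Kconst n m *
        ((Q : ℝ) ^ (m + n - 1) * (ψ Q / Q) ^ (s - m * ((n : ℝ) - 1)))) := by
  classical
  set ρ : ℝ := ψ Q / Q with hρdef
  have hQpos : (0 : ℝ) < Q := by exact_mod_cast hQ1
  have hρpos : 0 < ρ := div_pos hψpos hQpos
  clear_value ρ
  -- reduce to sum over Jt
  have hnone : tcov n m ψ Q none = ∅ := by
    rw [tcov, ← hρdef, if_neg (not_lt.2 hρ1)]
  have hsum0 : ∑' z : Option (Jt n m), diam (tcov n m ψ Q z) ^ s
      = ∑' z : Jt n m, diam (tcov n m ψ Q (some z)) ^ s := by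
    refine ((Option.some_injective _).tsum_eq ?_).symm
    intro x hx
    match x with
    | none =>
        exfalso
        apply hx
        show diam (tcov n m ψ Q none) ^ s = 0
        rw [hnone]
        simp [EMetric.diam, ENNReal.zero_rpow_of_pos hs]
    | some b => exact ⟨b, rfl⟩
  -- support finset
  set F : Finset (Jt n m) := Finset.univ.biUnion
    (fun i0 : Fin n => (Zfin n Q i0) ×ˢ ({i0} ×ˢ Ffin n m Q ρ i0)) with hF
  have hzero : ∀ z ∉ F, diam (tcov n m ψ Q (some z)) ^ s = 0 := by
    intro z hz
    rw [tcov]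
    split_ifs with h
    · exfalso
      apply hz
      obtain ⟨h1, h2, _h3, _h4, _h5, h6⟩ := h
      rw [← hρdef] at h6
      refine Finset.mem_biUnion.2 ⟨z.2.1, Finset.mem_univ _, ?_⟩
      refine Finset.mem_product.2 ⟨?_, Finset.mem_product.2
        ⟨Finset.mem_singleton_self _, h6⟩⟩
      rw [Zfin, Fintype.mem_piFinset]
      intro i
      by_cases hi : i = z.2.1
      · rw [if_pos hi]
        have h1' : (z.1 i).natAbs = Q := by rw [hi]; exact h1
        rcases Int.natAbs_eq_iff.1 h1' with h | h
        · exact Finset.mem_insert.2 (Or.inl h)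
        · exact Finset.mem_insert.2 (Or.inr (Finset.mem_singleton.2 h))
      · rw [if_neg hi, Finset.mem_Icc]
        have h2' := h2 i
        omega
    · simp [EMetric.diam, ENNReal.zero_rpow_of_pos hs]
  have hsum1 : ∑' z : Jt n m, diam (tcov n m ψ Q (some z)) ^ s
      = ∑ z ∈ F, diam (tcov n m ψ Q (some z)) ^ s := tsum_eq_sum hzero
  have hterm : ∀ z ∈ F, diam (tcov n m ψ Q (some z)) ^ s ≤ ENNReal.ofReal (ρ ^ s) := by
    intro z _
    rw [tcov]
    split_ifs with h
    · rw [← hρdef]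
      refine le_trans (ENNReal.rpow_le_rpow (diam_cube _ _) hs.le) ?_
      exact le_of_eq (ENNReal.ofReal_rpow_of_pos hρpos)
    · simp [EMetric.diam, ENNReal.zero_rpow_of_pos hs]
  have hsum2 : ∑ z ∈ F, diam (tcov n m ψ Q (some z)) ^ s
      ≤ (F.card : ℝ≥0∞) * ENNReal.ofReal (ρ ^ s) := by
    refine le_trans (Finset.sum_le_card_nsmul _ _ _ hterm) ?_
    rw [nsmul_eq_mul]
  -- card bound, real level
  have hcard : (F.card : ℝ) ≤ (n : ℝ) * ((2 * (2 * (Q : ℝ) + 1) ^ (n - 1)) *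
      ((2 * (n : ℝ) * Q + 3) * ((2 * (n : ℝ) + 1) * ((⌈1/ρ⌉ : ℝ) + 1) ^ (n - 1))) ^ m) := by
    have h1 : F.card ≤ ∑ i0 : Fin n, ((Zfin n Q i0) ×ˢ ({i0} ×ˢ Ffin n m Q ρ i0)).card :=
      Finset.card_biUnion_le
    have h2 : (F.card : ℝ) ≤ ∑ i0 : Fin n,
        (((Zfin n Q i0) ×ˢ ({i0} ×ˢ Ffin n m Q ρ i0)).card : ℝ) := by
      exact_mod_cast h1
    refine h2.trans ?_
    have h3 : ∀ i0 : Fin n, (((Zfin n Q i0) ×ˢ ({i0} ×ˢ Ffin n m Q ρ i0)).card : ℝ)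
        ≤ (2 * (2 * (Q : ℝ) + 1) ^ (n - 1)) *
          ((2 * (n : ℝ) * Q + 3) * ((2 * (n : ℝ) + 1) * ((⌈1/ρ⌉ : ℝ) + 1) ^ (n - 1))) ^ m := by
      intro i0
      rw [Finset.card_product, Finset.card_product, Finset.card_singleton, one_mul]
      push_cast
      rw [card_Ffin_eq n m Q hρpos i0]
      have hZ := card_Zfin_le n Q i0
      have hFf : (0:ℝ) ≤ ((2 * (n : ℝ) * Q + 3) *
          ((2 * (n : ℝ) + 1) * ((⌈1/ρ⌉ : ℝ) + 1) ^ (n - 1))) ^ m := by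
        have hceil : (0:ℝ) ≤ (⌈1/ρ⌉ : ℝ) := by
          exact_mod_cast Int.ceil_nonneg (by positivity : (0:ℝ) ≤ 1/ρ)
        positivity
      exact mul_le_mul_of_nonneg_right hZ hFf
    calc ∑ i0 : Fin n, (((Zfin n Q i0) ×ˢ ({i0} ×ˢ Ffin n m Q ρ i0)).card : ℝ)
        ≤ ∑ _i0 : Fin n, ((2 * (2 * (Q : ℝ) + 1) ^ (n - 1)) *
          ((2 * (n : ℝ) * Q + 3) * ((2 * (n : ℝ) + 1) * ((⌈1/ρ⌉ : ℝ) + 1) ^ (n - 1))) ^ m) :=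
          Finset.sum_le_sum fun i0 _ => h3 i0
    _ = (n : ℝ) * _ := by
        rw [Finset.sum_const, Finset.card_univ, Fintype.card_fin, nsmul_eq_mul]
  -- split exponent
  set M : ℕ := m * (n - 1) with hM
  have hMr : ((M : ℕ) : ℝ) = (m : ℝ) * ((n : ℝ) - 1) := by
    rw [hM]; push_cast [Nat.cast_sub hn]; ring
  have hsplit : ρ ^ s = ρ ^ M * ρ ^ (s - (m : ℝ) * ((n : ℝ) - 1)) := by
    rw [← Real.rpow_natCast ρ M, ← Real.rpow_add hρpos, hMr]
    congr 1; ring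
  have hQ1r : (1 : ℝ) ≤ Q := by exact_mod_cast hQ1
  have hceilnn : (0 : ℝ) ≤ (⌈1/ρ⌉ : ℝ) := by
    exact_mod_cast Int.ceil_nonneg (by positivity : (0:ℝ) ≤ 1/ρ)
  have hkey : (F.card : ℝ) * ρ ^ M ≤ Kconst n m * (Q : ℝ) ^ (m + n - 1) := by
    have hA : (2 * (Q : ℝ) + 1) ^ (n - 1) ≤ 3 ^ (n - 1) * (Q : ℝ) ^ (n - 1) := by
      rw [← mul_pow]
      exact pow_le_pow_left₀ (by positivity) (by linarith) _
    have hB : ((⌈1/ρ⌉ : ℝ) + 1) * ρ ≤ 3 := by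
      have h := Int.ceil_lt_add_one (1/ρ)
      have h2 : ((⌈1/ρ⌉ : ℝ) + 1) ≤ 1/ρ + 2 := by linarith
      calc ((⌈1/ρ⌉ : ℝ) + 1) * ρ ≤ (1/ρ + 2) * ρ := mul_le_mul_of_nonneg_right h2 hρpos.le
      _ = 1 + 2 * ρ := by field_simp
      _ ≤ 3 := by linarith
    have hC : ((⌈1/ρ⌉ : ℝ) + 1) ^ (n - 1) * ρ ^ (n - 1) ≤ 3 ^ (n - 1) := by
      rw [← mul_pow]
      exact pow_le_pow_left₀ (by positivity) hB _
    have hP : 2 * (n : ℝ) * Q + 3 ≤ (2 * (n : ℝ) + 3) * Q := by nlinarith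
    have hρM : ρ ^ M = (ρ ^ (n - 1)) ^ m := by rw [← pow_mul, hM, Nat.mul_comm]
    have hbase : (2 * (n : ℝ) * Q + 3) * ((2 * (n : ℝ) + 1) * ((⌈1/ρ⌉ : ℝ) + 1) ^ (n - 1))
        * ρ ^ (n - 1) ≤ ((2 * (n : ℝ) + 3) * (2 * (n : ℝ) + 1) * 3 ^ (n - 1)) * Q := by
      calc (2 * (n : ℝ) * Q + 3) * ((2 * (n : ℝ) + 1) * ((⌈1/ρ⌉ : ℝ) + 1) ^ (n - 1))
            * ρ ^ (n - 1)
          = (2 * (n : ℝ) * Q + 3) * (2 * (n : ℝ) + 1) *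
            (((⌈1/ρ⌉ : ℝ) + 1) ^ (n - 1) * ρ ^ (n - 1)) := by ring
      _ ≤ ((2 * (n : ℝ) + 3) * Q) * (2 * (n : ℝ) + 1) * 3 ^ (n - 1) := by
          gcongr <;> positivity
      _ = _ := by ring
    have hpow : ((2 * (n : ℝ) * Q + 3) * ((2 * (n : ℝ) + 1) * ((⌈1/ρ⌉ : ℝ) + 1) ^ (n - 1))) ^ m
        * (ρ ^ (n - 1)) ^ m
        ≤ ((2 * (n : ℝ) + 3) * (2 * (n : ℝ) + 1) * 3 ^ (n - 1)) ^ m * (Q : ℝ) ^ m := by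
      rw [← mul_pow, ← mul_pow]
      exact pow_le_pow_left₀ (by positivity) hbase m
    calc (F.card : ℝ) * ρ ^ M
        ≤ ((n : ℝ) * ((2 * (2 * (Q : ℝ) + 1) ^ (n - 1)) *
          ((2 * (n : ℝ) * Q + 3) * ((2 * (n : ℝ) + 1) * ((⌈1/ρ⌉ : ℝ) + 1) ^ (n - 1))) ^ m))
          * ρ ^ M := mul_le_mul_of_nonneg_right hcard (by positivity)
    _ = ((n : ℝ) * 2 * (2 * (Q : ℝ) + 1) ^ (n - 1)) *
          (((2 * (n : ℝ) * Q + 3) * ((2 * (n : ℝ) + 1) * ((⌈1/ρ⌉ : ℝ) + 1) ^ (n - 1))) ^ m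
            * (ρ ^ (n - 1)) ^ m) := by
        rw [hρM]; ring
    _ ≤ ((n : ℝ) * 2 * (3 ^ (n - 1) * (Q : ℝ) ^ (n - 1))) *
          (((2 * (n : ℝ) + 3) * (2 * (n : ℝ) + 1) * 3 ^ (n - 1)) ^ m * (Q : ℝ) ^ m) := by
        refine mul_le_mul ?_ hpow (by positivity) (by positivity)
        exact mul_le_mul_of_nonneg_left hA (by positivity)
    _ = Kconst n m * (Q : ℝ) ^ (m + n - 1) := by
        rw [Kconst, show m + n - 1 = (n - 1) + m from by omega, pow_add]
        ring
  rw [hsum0, hsum1]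
  refine hsum2.trans ?_
  rw [← ENNReal.ofReal_natCast F.card, ← ENNReal.ofReal_mul (by positivity)]
  refine ENNReal.ofReal_le_ofReal ?_
  rw [hsplit]
  calc (F.card : ℝ) * (ρ ^ M * ρ ^ (s - (m : ℝ) * ((n : ℝ) - 1)))
      = ((F.card : ℝ) * ρ ^ M) * ρ ^ (s - (m : ℝ) * ((n : ℝ) - 1)) := by ring
  _ ≤ (Kconst n m * (Q : ℝ) ^ (m + n - 1)) * ρ ^ (s - (m : ℝ) * ((n : ℝ) - 1)) :=
      mul_le_mul_of_nonneg_right hkey (Real.rpow_nonneg hρpos.le _)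
  _ = _ := by ring

/-- Convergence half of the Khintchine–Groshev theorem for Hausdorff measures: for
`nm > 1` and `s ∈ (m(n−1), nm]`, if `∑ q^{m+n−1} (ψ(q)/q)^{s−m(n−1)} < ∞` then
`H^s(W_{n,m}(ψ)) = 0`. -/
theorem khintchine_groshev_convergence (n m : ℕ) (hn : 1 ≤ n) (hm : 1 ≤ m)
    (hnm : 1 < n * m) (ψ : ℕ → ℝ) (hψ : ∀ q, 0 ≤ ψ q) (s : ℝ)
    (hs1 : (m : ℝ) * ((n : ℝ) - 1) < s) (hs2 : s ≤ (n : ℝ) * m)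
    (hsum : Summable fun q : ℕ =>
      (q : ℝ) ^ (m + n - 1) * (ψ q / q) ^ (s - m * ((n : ℝ) - 1))) :
    μH[s] {X : Fin n → Fin m → ℝ | (∀ i j, X i j ∈ Set.Ico (0 : ℝ) 1) ∧
        {q : Fin n → ℤ | q ≠ 0 ∧ ∀ j : Fin m,
          distNearestInt (∑ i : Fin n, (q i : ℝ) * X i j) <
            ψ (Finset.univ.sup fun i => (q i).natAbs)}.Infinite} = 0 := by
  classical
  have hn1r : (1 : ℝ) ≤ n := by exact_mod_cast hn
  have hs0 : 0 < s :=
    lt_of_le_of_lt (mul_nonneg (Nat.cast_nonneg m) (by linarith)) hs1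
  have hη : 0 < s - (m : ℝ) * ((n : ℝ) - 1) := by linarith
  set η : ℝ := s - (m : ℝ) * ((n : ℝ) - 1) with hηdef
  set a : ℕ → ℝ := fun Q => (Q : ℝ) ^ (m + n - 1) * (ψ Q / Q) ^ η with hadef
  have ha0 : ∀ Q, 0 ≤ a Q := fun Q =>
    mul_nonneg (by positivity) (Real.rpow_nonneg (div_nonneg (hψ Q) (Nat.cast_nonneg Q)) _)
  have haT : Filter.Tendsto a Filter.atTop (𝓝 0) := hsum.tendsto_atTop_zero
  -- ψ Q / Q → 0
  have hρ0 : Filter.Tendsto (fun Q : ℕ => ψ Q / Q) Filter.atTop (𝓝 0) := by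
    rw [Metric.tendsto_atTop]
    intro ε hε
    have hεη : 0 < ε ^ η := Real.rpow_pos_of_pos hε _
    rw [Metric.tendsto_atTop] at haT
    obtain ⟨N₁, hN₁⟩ := haT (ε ^ η) hεη
    refine ⟨max N₁ 1, fun Q hQ => ?_⟩
    have hQ1 : 1 ≤ Q := le_trans (le_max_right _ _) hQ
    have hQ1r : (1 : ℝ) ≤ Q := by exact_mod_cast hQ1
    have haQ : a Q < ε ^ η := by
      have := hN₁ Q (le_trans (le_max_left _ _) hQ)
      rw [Real.dist_eq, sub_zero, abs_of_nonneg (ha0 Q)] at this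
      exact this
    have hρnn : 0 ≤ ψ Q / Q := div_nonneg (hψ Q) (by positivity)
    rw [Real.dist_eq, sub_zero, abs_of_nonneg hρnn]
    by_contra hcon
    push_neg at hcon
    have h1 : ε ^ η ≤ (ψ Q / Q) ^ η := Real.rpow_le_rpow hε.le hcon hη.le
    have h2 : (ψ Q / Q) ^ η ≤ a Q := by
      rw [hadef]
      have h3 : (1 : ℝ) ≤ (Q : ℝ) ^ (m + n - 1) := one_le_pow₀ hQ1r
      nlinarith [Real.rpow_nonneg hρnn η]
    linarith
  -- choose N₀
  have hN₀ : ∃ N₀ : ℕ, 1 ≤ N₀ ∧ ∀ Q, N₀ ≤ Q → ψ Q / Q ≤ 1 := by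
    rw [Metric.tendsto_atTop] at hρ0
    obtain ⟨N₁, hN₁⟩ := hρ0 1 one_pos
    refine ⟨max N₁ 1, le_max_right _ _, fun Q hQ => ?_⟩
    have := hN₁ Q (le_trans (le_max_left _ _) hQ)
    rw [Real.dist_eq, sub_zero] at this
    exact le_of_lt (lt_of_le_of_lt (le_abs_self _) this)
  obtain ⟨N₀, hN₀1, hN₀⟩ := hN₀
  -- the sets E Q
  set E : ℕ → Set (Fin n → Fin m → ℝ) := fun Q =>
    {X | (∀ i j, X i j ∈ Set.Ico (0 : ℝ) 1) ∧ ∃ q : Fin n → ℤ, q ≠ 0 ∧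
      (Finset.univ.sup fun i => (q i).natAbs) = Q ∧
      ∀ j, distNearestInt (∑ i, (q i : ℝ) * X i j) < ψ Q} with hEdef
  -- cost function
  set c : ℕ → ℝ≥0∞ := fun Q => ∑' z : Option (Jt n m), diam (tcov n m ψ Q z) ^ s with hcdef
  set b : ℕ → ℝ≥0∞ := fun Q => ENNReal.ofReal (Kconst n m * a Q) with hbdef
  have hbne : ∑' Q, b Q ≠ ⊤ := by
    have h1 : ∀ Q, b Q = ENNReal.ofReal (Kconst n m) * ENNReal.ofReal (a Q) := fun Q => by
      rw [hbdef, ← ENNReal.ofReal_mul (Kconst_nonneg n m)]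
    have h2 : ∑' Q, b Q = ENNReal.ofReal (Kconst n m) * ∑' Q, ENNReal.ofReal (a Q) := by
      rw [tsum_congr h1, ENNReal.tsum_mul_left]
    rw [h2, ← ENNReal.ofReal_tsum_of_nonneg ha0 hsum]
    exact ENNReal.mul_ne_top ENNReal.ofReal_ne_top ENNReal.ofReal_ne_top
  have hcb : ∀ Q, N₀ ≤ Q → c Q ≤ b Q := by
    intro Q hQ
    rcases (hψ Q).lt_or_eq with hψQ | hψQ
    · exact tcov_cost n m hn ψ hs0 Q (le_trans hN₀1 hQ) hψQ (hN₀ Q hQ)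
    · -- ψ Q = 0 : all sets empty
      have hzero : ∀ z : Option (Jt n m), tcov n m ψ Q z = ∅ := by
        intro z
        rcases z with _ | z
        · rw [tcov, if_neg]
          rw [← hψQ, zero_div]
          exact not_lt.2 zero_le_one
        · rw [tcov, if_neg]
          intro h
          have h2 := h.2.2.2.1
          rw [← hψQ] at h2
          exact lt_irrefl 0 h2
      have hc0 : c Q = 0 := by
        simp only [hcdef]
        have hzz : ∀ z : Option (Jt n m), diam (tcov n m ψ Q z) ^ s = (0 : ℝ≥0∞) := by
          intro z
          rw [hzero z]
          simp [EMetric.diam, ENNReal.zero_rpow_of_pos hs0]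
        rw [tsum_congr hzz, tsum_zero]
      rw [hc0]
      exact zero_le
  refine hcantelli s _ E (tcov n m ψ)
    (fun Q => ENNReal.ofReal (min (ψ Q / Q) 1)) ?_ ?_ ?_ ?_ ?_
  · -- cover
    intro Q X hX
    obtain ⟨hXcube, q, hq0, hsup, hdq⟩ := hX
    exact Set.mem_iUnion.2 (tcov_cover n m hn hm ψ Q X hXcube q hq0 hsup hdq)
  · exact fun Q z => tcov_diam n m ψ Q z
  · -- δ → 0
    have h1 : Filter.Tendsto (fun Q : ℕ => min (ψ Q / Q) 1) Filter.atTop (𝓝 (min 0 1)) :=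
      hρ0.min tendsto_const_nhds
    rw [min_eq_left zero_le_one] at h1
    have h2 := ENNReal.tendsto_ofReal h1
    rwa [ENNReal.ofReal_zero] at h2
  · -- tails tend to zero
    have hbtail : Filter.Tendsto (fun N => ∑' k : ℕ, b (N + k)) Filter.atTop (𝓝 0) := by
      have h1 := ENNReal.tendsto_sum_nat_add b hbne
      have h2 : (fun N => ∑' k : ℕ, b (N + k)) = fun N => ∑' k : ℕ, b (k + N) := by
        funext N
        exact tsum_congr fun k => by rw [Nat.add_comm]
      rw [h2]
      exact h1
    refine tendsto_of_tendsto_of_tendsto_of_le_of_le' tendsto_const_nhds hbtail ?_ ?_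
    · filter_upwards with N
      exact zero_le
    · filter_upwards [Filter.eventually_ge_atTop N₀] with N hN
      exact ENNReal.tsum_le_tsum fun k => hcb (N + k) (le_trans hN (Nat.le_add_right _ _))
  · -- S ⊆ ⋃_{Q ≥ N} E Q
    intro N X hX
    obtain ⟨hXcube, hInf⟩ := hX
    have hfin : {q : Fin n → ℤ | (Finset.univ.sup fun i => (q i).natAbs) < N}.Finite := by
      refine Set.Finite.subset (Finset.finite_toSet
        (Fintype.piFinset fun _ : Fin n => Finset.Icc (-(N : ℤ)) N)) ?_
      intro q hq
      simp only [Finset.coe_sort_coe, Finset.mem_coe, Fintype.mem_piFinset, Finset.mem_Icc]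
      intro i
      have h1 : (q i).natAbs ≤ (Finset.univ.sup fun i => (q i).natAbs) :=
        Finset.le_sup (f := fun i => (q i).natAbs) (Finset.mem_univ i)
      have h2 : (q i).natAbs < N := lt_of_le_of_lt h1 hq
      omega
    obtain ⟨q, hqmem, hqout⟩ := (hInf.diff hfin).nonempty
    obtain ⟨hq0, hdq⟩ := hqmem
    have hsupN : N ≤ (Finset.univ.sup fun i => (q i).natAbs) := by
      by_contra hcon
      push_neg at hcon
      exact hqout hcon
    refine Set.mem_iUnion₂.2 ⟨(Finset.univ.sup fun i => (q i).natAbs), hsupN, ?_⟩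
    exact ⟨hXcube, q, hq0, rfl, hdq⟩
end

section
/- Fix n ≥ 2 and τ ≥ n, and let A_n(τ) denote the set of real numbers x in a fixed bounded interval I for which |x − α| < H(α)^{−τ−1} holds for infinitely many real algebraic numbers α of degree exactly n over ℚ, where H(α) is the maximum absolute value of the coefficients of the minimal integer polynomial of α. Then for any s > (n+1)/(τ+1), the s-dimensional Hausdorff measure of A_n(τ) is zero; hence dimH A_n(τ) ≤ (n+1)/(τ+1). -/
open MeasureTheory MeasureTheory.Measure Polynomial Filter Topology
open scoped ENNReal NNReal

/-- The (naive) height of an integer polynomial: the maximum absolute value of its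
coefficients. -/
noncomputable def polyHeight (P : Polynomial ℤ) : ℕ :=
  (Finset.range (P.natDegree + 1)).sup fun i => (P.coeff i).natAbs

/-- `α` is a real algebraic number of degree exactly `n` over `ℚ`. -/
def IsAlgebraicOfDegree (n : ℕ) (α : ℝ) : Prop :=
  (∃ P : Polynomial ℤ, P ≠ 0 ∧ P.natDegree = n ∧ Polynomial.aeval α P = 0) ∧
    ∀ Q : Polynomial ℤ, Q ≠ 0 → Q.natDegree < n → Polynomial.aeval α Q ≠ 0

/-- The height of an algebraic number `α` of degree `n`: the least height of a nonzero
degree-`n` integer polynomial vanishing at `α` (equivalently, the height of the minimal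
integer polynomial of `α`). -/
noncomputable def algHeight (n : ℕ) (α : ℝ) : ℕ :=
  sInf {h : ℕ | ∃ P : Polynomial ℤ, P ≠ 0 ∧ P.natDegree = n ∧
    Polynomial.aeval α P = 0 ∧ polyHeight P = h}



/-- integer coefficient vectors of height exactly `h`. -/
noncomputable def BS.polyFinset (n h : ℕ) : Finset (Fin (n+1) → ℤ) :=
  (Fintype.piFinset fun _ => Finset.Icc (-(h:ℤ)) h).filter (fun v => ∃ i, (v i).natAbs = h)

/-- real polynomial attached to a coefficient vector. -/
noncomputable def BS.Q (n : ℕ) (v : Fin (n+1) → ℤ) : Polynomial ℝ :=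
  ∑ i : Fin (n+1), Polynomial.C ((v i : ℝ)) * Polynomial.X ^ (i : ℕ)

noncomputable def BS.rootsFinset (n : ℕ) (v : Fin (n+1) → ℤ) : Finset ℝ :=
  (BS.Q n v).roots.toFinset

lemma BS.card_rootsFinset_le (n : ℕ) (v : Fin (n+1) → ℤ) :
    (BS.rootsFinset n v).card ≤ n := by
  refine (Multiset.toFinset_card_le _).trans ((Polynomial.card_roots' _).trans ?_)
  refine Polynomial.natDegree_sum_le_of_forall_le _ _ fun i _ => ?_
  exact (Polynomial.natDegree_C_mul_X_pow_le _ _).trans (Nat.lt_succ_iff.mp i.2)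

lemma BS.card_polyFinset_le (n h : ℕ) :
    (BS.polyFinset n h).card ≤ (n+1) * (2 * (2*h+1)^n) := by
  classical
  have hsub : BS.polyFinset n h ⊆
      (Finset.univ : Finset (Fin (n+1))).biUnion (fun i =>
        Fintype.piFinset fun j => if j = i then ({(h:ℤ), -(h:ℤ)} : Finset ℤ)
          else Finset.Icc (-(h:ℤ)) h) := by
    intro v hv
    rw [BS.polyFinset, Finset.mem_filter, Fintype.mem_piFinset] at hv
    obtain ⟨hbox, i, hi⟩ := hv
    refine Finset.mem_biUnion.2 ⟨i, Finset.mem_univ _, ?_⟩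
    rw [Fintype.mem_piFinset]
    intro j
    by_cases hij : j = i
    · subst hij
      rw [if_pos rfl, Finset.mem_insert, Finset.mem_singleton, ← hi]
      exact Int.natAbs_eq _
    · simpa [hij] using hbox j
  refine (Finset.card_le_card hsub).trans ((Finset.card_biUnion_le).trans ?_)
  have hcard : ∀ i : Fin (n+1),
      (Fintype.piFinset fun j => if j = i then ({(h:ℤ), -(h:ℤ)} : Finset ℤ)
        else Finset.Icc (-(h:ℤ)) h).card ≤ 2 * (2*h+1)^n := by
    intro i
    rw [Fintype.card_piFinset]
    rw [← Finset.mul_prod_erase Finset.univ _ (Finset.mem_univ i)]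
    have h1 : (if i = i then ({(h:ℤ), -(h:ℤ)} : Finset ℤ)
        else Finset.Icc (-(h:ℤ)) h).card ≤ 2 := by
      simp only [if_pos rfl]
      exact (Finset.card_insert_le _ _).trans (by simp)
    have h2 : ∏ j ∈ Finset.univ.erase i,
        (if j = i then ({(h:ℤ), -(h:ℤ)} : Finset ℤ)
          else Finset.Icc (-(h:ℤ)) h).card = (2*h+1)^n := by
      rw [Finset.prod_congr rfl (fun j hj => ?_), Finset.prod_const]
      · congr 1
        · simp [Finset.card_erase_of_mem]
      · rw [if_neg (Finset.mem_erase.1 hj).1, Int.card_Icc]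
        omega
    calc _ ≤ 2 * ∏ j ∈ Finset.univ.erase i,
        (if j = i then ({(h:ℤ), -(h:ℤ)} : Finset ℤ)
          else Finset.Icc (-(h:ℤ)) h).card := Nat.mul_le_mul_right _ h1
      _ = 2 * (2*h+1)^n := by rw [h2]
  calc ∑ i : Fin (n+1), (Fintype.piFinset fun j => if j = i then ({(h:ℤ), -(h:ℤ)} : Finset ℤ)
        else Finset.Icc (-(h:ℤ)) h).card
      ≤ ∑ _i : Fin (n+1), 2 * (2*h+1)^n := Finset.sum_le_sum fun i _ => hcard i
    _ = (n+1) * (2 * (2*h+1)^n) := by simp [Finset.sum_const, mul_comm]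

lemma BS.exists_mem_cover {n : ℕ} {α : ℝ} (hα : IsAlgebraicOfDegree n α) :
    ∃ v ∈ BS.polyFinset n (algHeight n α), α ∈ BS.rootsFinset n v := by
  classical
  have hne : {h : ℕ | ∃ P : Polynomial ℤ, P ≠ 0 ∧ P.natDegree = n ∧
      Polynomial.aeval α P = 0 ∧ polyHeight P = h}.Nonempty := by
    obtain ⟨P, hP0, hPd, hPa⟩ := hα.1
    exact ⟨polyHeight P, P, hP0, hPd, hPa, rfl⟩
  obtain ⟨P, hP0, hPd, hPa, hPh⟩ := Nat.sInf_mem hne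
  set h := algHeight n α with hh
  have hPh2 : polyHeight P = h := hPh
  -- coefficient vector
  set v : Fin (n+1) → ℤ := fun i => P.coeff i with hv
  have hcoeff_le : ∀ i : Fin (n+1), (P.coeff (i:ℕ)).natAbs ≤ h := by
    intro i
    rw [← hPh2]
    have hmem : (i:ℕ) ∈ Finset.range (P.natDegree + 1) :=
      Finset.mem_range.2 (by rw [hPd]; exact i.2)
    exact Finset.le_sup (f := fun j => (P.coeff j).natAbs) hmem
  have hvmem : v ∈ BS.polyFinset n h := by
    rw [BS.polyFinset, Finset.mem_filter, Fintype.mem_piFinset]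
    constructor
    · intro i
      rw [Finset.mem_Icc]
      show -(h:ℤ) ≤ P.coeff i ∧ P.coeff i ≤ (h:ℤ)
      have := hcoeff_le i
      omega
    · obtain ⟨i, hi, hieq⟩ := Finset.exists_mem_eq_sup (Finset.range (P.natDegree + 1))
        (by simp) (fun i => (P.coeff i).natAbs)
      rw [Finset.mem_range, hPd] at hi
      refine ⟨⟨i, hi⟩, ?_⟩
      show (P.coeff i).natAbs = h
      rw [← hieq]
      exact hPh2
  -- the real polynomial is the image of P
  have hmap : (BS.Q n v) = P.map (Int.castRingHom ℝ) := by
    conv_rhs => rw [P.as_sum_range' (n+1) (by omega)]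
    rw [Polynomial.map_sum, BS.Q, Fin.sum_univ_eq_sum_range (fun i => Polynomial.C ((P.coeff i : ℝ))
      * Polynomial.X ^ i)]
    refine Finset.sum_congr rfl fun i _ => ?_
    rw [Polynomial.map_monomial, ← Polynomial.C_mul_X_pow_eq_monomial]
    rfl
  have hQ0 : BS.Q n v ≠ 0 := by
    rw [hmap]
    exact (Polynomial.map_ne_zero_iff (Int.cast_injective (α := ℝ))).2 hP0
  have hroot : (BS.Q n v).IsRoot α := by
    rw [Polynomial.IsRoot, hmap, ← Polynomial.eval₂_eq_eval_map]
    rw [Polynomial.aeval_def] at hPa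
    simpa using hPa
  exact ⟨v, hvmem, Multiset.mem_toFinset.2 ((Polynomial.mem_roots hQ0).2 hroot)⟩

lemma BS.finite_heights (n h : ℕ) :
    {α : ℝ | IsAlgebraicOfDegree n α ∧ algHeight n α = h}.Finite := by
  classical
  refine Set.Finite.subset (Set.finite_coe_iff.1 ?_)
    (s := ((BS.polyFinset n h).biUnion (BS.rootsFinset n) : Finset ℝ)) ?_
  · exact FinsetCoe.fintype _ |>.finite
  · rintro α ⟨hα, rfl⟩
    obtain ⟨v, hv, hr⟩ := BS.exists_mem_cover hα
    exact Finset.mem_coe.2 (Finset.mem_biUnion.2 ⟨v, hv, hr⟩)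

section
variable (n : ℕ) (τ : ℝ)

/-- radius of approximation at height `h`. -/
noncomputable def BS.r (τ : ℝ) (h : ℕ) : ℝ := (h : ℝ) ^ (-τ - 1)

/-- enumeration of the roots attached to a coefficient vector. -/
noncomputable def BS.e (n : ℕ) (v : Fin (n+1) → ℤ) (j : ℕ) : ℝ :=
  (BS.rootsFinset n v).toList.getD j 0

/-- the covering family at stage `N`. -/
noncomputable def BS.t (n : ℕ) (τ : ℝ) (N : ℕ) (i : ℕ × ((Fin (n+1) → ℤ) × ℕ)) : Set ℝ :=
  if i.2.1 ∈ BS.polyFinset n (N + i.1) ∧ i.2.2 < (BS.rootsFinset n i.2.1).card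
  then Metric.ball (BS.e n i.2.1 i.2.2) (BS.r τ (N + i.1)) else ∅

lemma BS.cover (N : ℕ)
    {x : ℝ} (hx : {α : ℝ | IsAlgebraicOfDegree n α ∧
      |x - α| < (algHeight n α : ℝ) ^ (-τ - 1)}.Infinite) :
    x ∈ ⋃ i, BS.t n τ N i := by
  classical
  set T := {α : ℝ | IsAlgebraicOfDegree n α ∧
      |x - α| < (algHeight n α : ℝ) ^ (-τ - 1)} with hT
  have hex : ∃ α ∈ T, N ≤ algHeight n α := by
    by_contra hcon
    push_neg at hcon
    refine hx ?_
    have hsub : T ⊆ ⋃ h ∈ Finset.range N,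
        {α : ℝ | IsAlgebraicOfDegree n α ∧ algHeight n α = h} := by
      intro α hα
      exact Set.mem_biUnion (Finset.mem_range.2 (hcon α hα)) ⟨hα.1, rfl⟩
    exact Set.Finite.subset
      (Set.Finite.biUnion (Finset.range N).finite_toSet fun h _ => BS.finite_heights n h) hsub
  obtain ⟨α, hαT, hN⟩ := hex
  obtain ⟨v, hv, hroot⟩ := BS.exists_mem_cover hαT.1
  have hlist : α ∈ (BS.rootsFinset n v).toList := (Finset.mem_toList).2 hroot
  obtain ⟨j, hj, hje⟩ := List.mem_iff_getElem.1 hlist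
  rw [Finset.length_toList] at hj
  have hej : BS.e n v j = α := by
    rw [BS.e, List.getD_eq_getElem _ _ (by rwa [Finset.length_toList])]
    exact hje
  set h := algHeight n α with hh
  refine Set.mem_iUnion.2 ⟨(h - N, v, j), ?_⟩
  have hNh : N + (h - N) = h := by omega
  rw [BS.t]
  simp only [hNh]
  rw [if_pos ⟨hv, hj⟩, hej, Metric.mem_ball, Real.dist_eq]
  exact hαT.2

lemma BS.diam_le {N : ℕ} (hN : 1 ≤ N) (i : ℕ × ((Fin (n+1) → ℤ) × ℕ)) (hτ0 : 0 ≤ τ) :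
    EMetric.diam (BS.t n τ N i) ≤ ENNReal.ofReal (2 * BS.r τ N) := by
  rw [BS.t]
  split_ifs with hcond
  · have h2 : (2 : ℝ≥0∞) * ENNReal.ofReal (BS.r τ N) ≤ ENNReal.ofReal (2 * BS.r τ N) := by
      rw [ENNReal.ofReal_mul (by norm_num), ENNReal.ofReal_ofNat]
    refine le_trans ?_ h2
    rw [← Metric.emetric_ball]
    refine (EMetric.diam_ball).trans ?_
    gcongr
    rw [BS.r, BS.r]
    refine Real.rpow_le_rpow_of_nonpos (by exact_mod_cast hN) (by exact_mod_cast Nat.le_add_right N i.1) (by linarith)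
  · rw [show EMetric.diam (∅ : Set ℝ) = 0 from EMetric.diam_empty]
    exact zero_le
end

/-- the dominating series. -/
noncomputable def BS.G (n : ℕ) (τ s : ℝ) (h : ℕ) : ℝ≥0∞ :=
  ENNReal.ofReal ((((n+1) * (2 * 3^n) * n : ℕ) : ℝ) * 2 ^ s * (h:ℝ) ^ ((n:ℝ) - (τ+1)*s))

lemma BS.term_le {n : ℕ} {τ s : ℝ} (hs0 : 0 < s) {h : ℕ} (hh : 1 ≤ h) :
    ((BS.polyFinset n h).card : ℝ≥0∞) * (n : ℝ≥0∞) * (ENNReal.ofReal (2 * BS.r τ h)) ^ s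
      ≤ BS.G n τ s h := by
  have h0 : (0:ℝ) < (h:ℝ) := by exact_mod_cast hh
  have hr0 : 0 ≤ BS.r τ h := Real.rpow_nonneg h0.le _
  rw [← Nat.cast_mul, ENNReal.ofReal_rpow_of_nonneg (by positivity) hs0.le,
    ← ENNReal.ofReal_natCast, ← ENNReal.ofReal_mul (Nat.cast_nonneg _), BS.G]
  refine ENNReal.ofReal_le_ofReal ?_
  -- natural number counting bound
  have hcnat : (BS.polyFinset n h).card * n ≤ ((n+1) * (2 * 3^n) * n) * h^n := by
    have h1 : (BS.polyFinset n h).card ≤ (n+1) * (2 * (2*h+1)^n) := BS.card_polyFinset_le n h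
    have h2 : (2*h+1)^n ≤ 3^n * h^n := by
      rw [← mul_pow]
      exact Nat.pow_le_pow_left (by omega) n
    calc (BS.polyFinset n h).card * n ≤ ((n+1) * (2 * (2*h+1)^n)) * n :=
          Nat.mul_le_mul_right n h1
      _ ≤ ((n+1) * (2 * (3^n * h^n))) * n := by
          exact Nat.mul_le_mul_right n (Nat.mul_le_mul_left _ (Nat.mul_le_mul_left _ h2))
      _ = ((n+1) * (2 * 3^n) * n) * h^n := by ring
  have hcR : ((BS.polyFinset n h).card * n : ℝ) ≤ (((n+1) * (2 * 3^n) * n : ℕ) : ℝ) * (h:ℝ)^n := by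
    push_cast
    exact_mod_cast hcnat
  calc (((BS.polyFinset n h).card * n : ℕ) : ℝ) * (2 * BS.r τ h) ^ s
      ≤ ((((n+1) * (2 * 3^n) * n : ℕ)) : ℝ) * (h:ℝ)^n * (2 * BS.r τ h) ^ s := by
        have : (0:ℝ) ≤ (2 * BS.r τ h) ^ s := Real.rpow_nonneg (by positivity) _
        exact mul_le_mul_of_nonneg_right (by exact_mod_cast hcR) this
    _ = ((((n+1) * (2 * 3^n) * n : ℕ)) : ℝ) * 2 ^ s * ((h:ℝ) ^ ((n:ℕ):ℝ) * (h:ℝ) ^ ((-τ-1)*s)) := by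
        rw [Real.mul_rpow (by norm_num) hr0, BS.r, ← Real.rpow_natCast (h:ℝ) n,
          ← Real.rpow_mul h0.le]
        ring
    _ = ((((n+1) * (2 * 3^n) * n : ℕ)) : ℝ) * 2 ^ s * (h:ℝ) ^ ((n:ℝ) - (τ+1)*s) := by
        rw [← Real.rpow_add h0]
        have he : ((n:ℕ):ℝ) + (-τ-1)*s = (n:ℝ) - (τ+1)*s := by push_cast; ring
        rw [he]

lemma BS.stage_le {n : ℕ} {τ s : ℝ} (hs0 : 0 < s) (hτ0 : 0 ≤ τ) {N : ℕ} (hN : 1 ≤ N) :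
    ∑' i : ℕ × ((Fin (n+1) → ℤ) × ℕ), EMetric.diam (BS.t n τ N i) ^ s
      ≤ ∑' k : ℕ, BS.G n τ s (N + k) := by
  classical
  rw [ENNReal.tsum_prod']
  refine ENNReal.tsum_le_tsum fun k => ?_
  set B : ℝ≥0∞ := (ENNReal.ofReal (2 * BS.r τ (N + k))) ^ s with hB
  have hpt : ∀ p : (Fin (n+1) → ℤ) × ℕ,
      EMetric.diam (BS.t n τ N (k, p)) ^ s ≤
        (if p.1 ∈ BS.polyFinset n (N + k) ∧ p.2 < n then B else 0) := by
    intro p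
    rw [BS.t]
    dsimp only
    split_ifs with h1 h2
    · refine ENNReal.rpow_le_rpow ?_ hs0.le
      have h2' : (2 : ℝ≥0∞) * ENNReal.ofReal (BS.r τ (N + k))
          ≤ ENNReal.ofReal (2 * BS.r τ (N + k)) := by
        rw [ENNReal.ofReal_mul (by norm_num), ENNReal.ofReal_ofNat]
      exact le_trans (by rw [← Metric.emetric_ball]; exact EMetric.diam_ball) h2'
    · exact absurd ⟨h1.1, lt_of_lt_of_le h1.2 (BS.card_rootsFinset_le n p.1)⟩ h2
    all_goals simp [EMetric.diam, EMetric.diam_empty, ENNReal.zero_rpow_of_pos hs0]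
  refine le_trans (ENNReal.tsum_le_tsum hpt) ?_
  rw [ENNReal.tsum_prod']
  have hinner : ∀ v : Fin (n+1) → ℤ,
      (∑' j : ℕ, if v ∈ BS.polyFinset n (N + k) ∧ j < n then B else 0)
        = (if v ∈ BS.polyFinset n (N + k) then (n : ℝ≥0∞) * B else 0) := by
    intro v
    by_cases hv : v ∈ BS.polyFinset n (N + k)
    · simp only [hv, true_and, if_pos]
      rw [tsum_eq_sum (s := Finset.range n) (fun j hj => if_neg (by simpa using hj))]
      rw [Finset.sum_congr rfl (fun j hj => if_pos (Finset.mem_range.1 hj)), Finset.sum_const,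
        Finset.card_range, nsmul_eq_mul]
    · simp [hv]
  rw [tsum_congr hinner]
  rw [tsum_eq_sum (s := BS.polyFinset n (N + k)) (fun v hv => if_neg hv)]
  rw [Finset.sum_congr rfl (fun v hv => if_pos hv), Finset.sum_const, nsmul_eq_mul, ← mul_assoc]
  exact BS.term_le hs0 (by omega)

lemma BS.measure_zero (n : ℕ) (hn : 2 ≤ n) (τ : ℝ) (hτ : (n : ℝ) ≤ τ) (s : ℝ)
    (hs : ((n : ℝ) + 1) / (τ + 1) < s) :
    μH[s] {x : ℝ | {α : ℝ | IsAlgebraicOfDegree n α ∧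
      |x - α| < (algHeight n α : ℝ) ^ (-τ - 1)}.Infinite} = 0 := by
  have hn0 : (0:ℝ) ≤ n := Nat.cast_nonneg n
  have hτ1 : (0:ℝ) < τ + 1 := by linarith
  have hτ0 : (0:ℝ) ≤ τ := by linarith
  have hd0 : 0 < ((n:ℝ) + 1) / (τ + 1) := by positivity
  have hs0 : 0 < s := hd0.trans hs
  have hp : (n:ℝ) - (τ+1)*s < -1 := by
    have h1 : (n:ℝ) + 1 < s * (τ + 1) := (div_lt_iff₀ hτ1).1 hs
    nlinarith
  -- the dominating series is finite
  have hGsum : ∑' h : ℕ, BS.G n τ s h ≠ ⊤ := by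
    have hnn : ∀ h : ℕ, 0 ≤ (((n+1) * (2 * 3^n) * n : ℕ) : ℝ) * 2 ^ s
        * (h:ℝ) ^ ((n:ℝ) - (τ+1)*s) := fun h => by positivity
    have hsum : Summable (fun h : ℕ => (((n+1) * (2 * 3^n) * n : ℕ) : ℝ) * 2 ^ s
        * (h:ℝ) ^ ((n:ℝ) - (τ+1)*s)) := by
      simp_rw [mul_assoc]
      exact ((Real.summable_nat_rpow.2 hp).mul_left _).mul_left _
    rw [show (fun h : ℕ => BS.G n τ s h) = fun h : ℕ => ENNReal.ofReal
      ((((n+1) * (2 * 3^n) * n : ℕ) : ℝ) * 2 ^ s * (h:ℝ) ^ ((n:ℝ) - (τ+1)*s)) from rfl,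
      ← ENNReal.ofReal_tsum_of_nonneg hnn hsum]
    exact ENNReal.ofReal_ne_top
  refine le_antisymm ?_ zero_le
  set A := {x : ℝ | {α : ℝ | IsAlgebraicOfDegree n α ∧
      |x - α| < (algHeight n α : ℝ) ^ (-τ - 1)}.Infinite} with hA
  have hR : Tendsto (fun N : ℕ => ENNReal.ofReal (2 * BS.r τ N)) atTop (𝓝 0) := by
    have h1 : Tendsto (fun N : ℕ => BS.r τ N) atTop (𝓝 0) := by
      have h2 : Tendsto (fun x : ℝ => x ^ (-(τ+1))) atTop (𝓝 0) :=
        tendsto_rpow_neg_atTop (by linarith)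
      have h3 := h2.comp tendsto_natCast_atTop_atTop (α := ℕ)
      refine h3.congr fun N => ?_
      rw [Function.comp_apply, BS.r]
      congr 1
      ring
    have := (h1.const_mul (2:ℝ))
    rw [mul_zero] at this
    have h4 : Tendsto (fun N : ℕ => ENNReal.ofReal (2 * BS.r τ N)) atTop
        (𝓝 (ENNReal.ofReal 0)) := ENNReal.tendsto_ofReal this
    simpa using h4
  calc μH[s] A
      ≤ liminf (fun N : ℕ => ∑' i : ℕ × ((Fin (n+1) → ℤ) × ℕ),
          EMetric.diam (BS.t n τ N i) ^ s) atTop := by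
        refine hausdorffMeasure_le_liminf_tsum s A
          (fun N => ENNReal.ofReal (2 * BS.r τ N)) hR (BS.t n τ) ?_ ?_
        · exact eventually_atTop.2 ⟨1, fun N hN i => BS.diam_le n τ hN i hτ0⟩
        · exact Eventually.of_forall fun N => fun x hx => BS.cover n τ N hx
    _ ≤ liminf (fun N : ℕ => ∑' k : ℕ, BS.G n τ s (N + k)) atTop := by
        refine liminf_le_liminf (eventually_atTop.2 ⟨1, fun N hN => BS.stage_le hs0 hτ0 hN⟩)
    _ = 0 := by
        have ht : Tendsto (fun N : ℕ => ∑' k : ℕ, BS.G n τ s (k + N)) atTop (𝓝 0) :=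
          ENNReal.tendsto_sum_nat_add _ hGsum
        rw [show (fun N : ℕ => ∑' k : ℕ, BS.G n τ s (N + k))
            = fun N : ℕ => ∑' k : ℕ, BS.G n τ s (k + N) from
          funext fun N => tsum_congr fun k => by rw [Nat.add_comm]]
        exact ht.liminf_eq

/-- Baker–Schmidt upper bound: for `τ ≥ n`, the set of `x` in a bounded interval `[a,b]`
admitting infinitely many approximations `|x − α| < H(α)^{−τ−1}` by real algebraic
numbers `α` of degree exactly `n` has `H^s`-measure zero for every `s > (n+1)/(τ+1)`,
hence Hausdorff dimension at most `(n+1)/(τ+1)`. -/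
theorem baker_schmidt_upper (n : ℕ) (hn : 2 ≤ n) (τ : ℝ) (hτ : (n : ℝ) ≤ τ)
    (a b : ℝ) :
    (∀ s : ℝ, ((n : ℝ) + 1) / (τ + 1) < s →
      μH[s] {x : ℝ | x ∈ Set.Icc a b ∧
        {α : ℝ | IsAlgebraicOfDegree n α ∧
          |x - α| < (algHeight n α : ℝ) ^ (-τ - 1)}.Infinite} = 0) ∧
      dimH {x : ℝ | x ∈ Set.Icc a b ∧
        {α : ℝ | IsAlgebraicOfDegree n α ∧
          |x - α| < (algHeight n α : ℝ) ^ (-τ - 1)}.Infinite} ≤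
        ENNReal.ofReal (((n : ℝ) + 1) / (τ + 1)) := by
  have key : ∀ s : ℝ, ((n : ℝ) + 1) / (τ + 1) < s →
      μH[s] {x : ℝ | x ∈ Set.Icc a b ∧
        {α : ℝ | IsAlgebraicOfDegree n α ∧
          |x - α| < (algHeight n α : ℝ) ^ (-τ - 1)}.Infinite} = 0 := by
    intro s hs
    refine le_antisymm ?_ zero_le
    refine le_trans (measure_mono fun x hx => hx.2) (le_of_eq (BS.measure_zero n hn τ hτ s hs))
  refine ⟨key, ?_⟩
  refine dimH_le fun d' hd' => ?_
  by_contra hcon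
  have h1 : ((n:ℝ) + 1) / (τ + 1) < (d' : ℝ) := by
    by_contra h2
    push_neg at h2
    refine hcon ?_
    rw [← ENNReal.ofReal_coe_nnreal]
    exact ENNReal.ofReal_le_ofReal h2
  rw [key (d' : ℝ) h1] at hd'
  exact absurd hd' (by simp)
end
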